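/- arXiv:1005.0247 — 3 statements merged into one kernel-verified Lean document; each statement's English description precedes it below -/
import Mathlib

section
/- Let Φ : [0,∞] → [0,∞] be a non-decreasing function which is finite on [0,∞), let p ∈ (0,∞), and set Φ_p(t) = Φ(t^p), H_p(t) = log Φ_p(t). Let t₀ = sup{ t : Φ_p(t) = 0 } and let δ > t₀. Then ∫_δ^∞ dH_p(t)/t = ∞ (Lebesgue–Stieltjes integral) if and only if ∫_δ^∞ H_p(t) dt/t² = ∞. -/
open MeasureTheory Set Filter Function
open scoped ENNReal Topology

lemma l1 {t : ℝ} (ht : 0 < t) :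
    ∫⁻ s in Ioi t, ENNReal.ofReal (1 / s ^ 2) = ENNReal.ofReal (1 / t) := by
  have h1 : ∫⁻ s in Ioi t, ENNReal.ofReal (1 / s ^ 2)
      = ∫⁻ s in Ioi t, ENNReal.ofReal (s ^ (-2 : ℝ)) := by
    refine setLIntegral_congr_fun_ae measurableSet_Ioi (ae_of_all _ fun s hs => ?_)
    have hs0 : (0:ℝ) < s := ht.trans hs
    rw [Real.rpow_neg hs0.le, show ((2:ℝ) = ((2:ℕ):ℝ)) by norm_num, Real.rpow_natCast,
      one_div]
  rw [h1, ← ofReal_integral_eq_lintegral_ofReal (integrableOn_Ioi_rpow_of_lt (by norm_num) ht)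
    ((ae_restrict_iff' measurableSet_Ioi).2 (ae_of_all _ fun s hs =>
      Real.rpow_nonneg (le_of_lt (ht.trans hs)) _)),
    integral_Ioi_rpow_of_lt (by norm_num) ht]
  norm_num

  rw [Real.rpow_neg_one]

lemma l2aux {δ : ℝ} (hδ : 0 < δ) {k : ℝ} (hk : 0 ≤ k) {a b : ℝ → ℝ}
    (hb : Measurable b) (hab : ∀ s ∈ Ioi δ, a s ≤ b s + k) :
    ∫⁻ s in Ioi δ, ENNReal.ofReal (a s / s ^ 2)
      ≤ (∫⁻ s in Ioi δ, ENNReal.ofReal (b s / s ^ 2)) + ENNReal.ofReal (k / δ) := by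
  have step1 : ∫⁻ s in Ioi δ, ENNReal.ofReal (a s / s ^ 2)
      ≤ ∫⁻ s in Ioi δ, (ENNReal.ofReal (b s / s ^ 2) + ENNReal.ofReal (k / s ^ 2)) := by
    refine setLIntegral_mono' measurableSet_Ioi fun s hs => ?_
    have hs0 : (0:ℝ) < s := hδ.trans hs
    have h2 : (0:ℝ) < s ^ 2 := by positivity
    calc ENNReal.ofReal (a s / s ^ 2) ≤ ENNReal.ofReal (b s / s ^ 2 + k / s ^ 2) := by
          apply ENNReal.ofReal_le_ofReal
          rw [← add_div]
          exact div_le_div_of_nonneg_right (hab s hs) h2.le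
      _ ≤ _ := ENNReal.ofReal_add_le
  have hbm : Measurable fun s : ℝ => ENNReal.ofReal (b s / s ^ 2) :=
    (hb.div ((measurable_id.pow_const 2))).ennreal_ofReal
  rw [lintegral_add_left hbm] at step1
  refine step1.trans ?_
  gcongr
  have : ∀ s : ℝ, s ∈ Ioi δ → ENNReal.ofReal (k / s ^ 2)
      = ENNReal.ofReal k * ENNReal.ofReal (1 / s ^ 2) := by
    intro s hs
    rw [← ENNReal.ofReal_mul hk, mul_one_div]
  rw [setLIntegral_congr_fun_ae measurableSet_Ioi (ae_of_all _ this),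
    lintegral_const_mul _ (by measurability), l1 hδ, ← ENNReal.ofReal_mul hk, mul_one_div]

lemma l2 {δ : ℝ} (hδ : 0 < δ) (c : ℝ) {g : ℝ → ℝ} (hg : Measurable g) :
    (∫⁻ s in Ioi δ, ENNReal.ofReal ((g s - c) / s ^ 2) = ∞) ↔
      (∫⁻ s in Ioi δ, ENNReal.ofReal (g s / s ^ 2) = ∞) := by
  have h1 := l2aux hδ (abs_nonneg c) hg
    (fun s _ => by have := neg_abs_le c; linarith : ∀ s ∈ Ioi δ, g s - c ≤ g s + |c|)
  have h2 := l2aux hδ (abs_nonneg c) (hg.sub measurable_const)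
    (fun s _ => by have := le_abs_self c; linarith : ∀ s ∈ Ioi δ, g s ≤ (g s - c) + |c|)
  constructor
  · intro h
    by_contra hB
    rw [h] at h1
    exact (h1.trans_lt (ENNReal.add_lt_top.2 ⟨Ne.lt_top hB, ENNReal.ofReal_lt_top⟩)).ne rfl
  · intro h
    by_contra hB
    rw [h] at h2
    exact (h2.trans_lt (ENNReal.add_lt_top.2 ⟨Ne.lt_top hB, ENNReal.ofReal_lt_top⟩)).ne rfl

lemma l3 (F : StieltjesFunction ℝ) {δ : ℝ} (hδ : 0 < δ) :
    ∫⁻ t in Ioi δ, ENNReal.ofReal (1 / t) ∂F.measure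
      = ∫⁻ s in Ioi δ, ENNReal.ofReal ((F s - F δ) / s ^ 2) := by
  set μ := F.measure
  have stepA : ∀ t ∈ Ioi δ, ENNReal.ofReal (1 / t)
      = ∫⁻ s, indicator (Ici t) (fun s : ℝ => ENNReal.ofReal (1 / s ^ 2)) s := by
    intro t ht
    rw [lintegral_indicator measurableSet_Ici,
      setLIntegral_congr (Ioi_ae_eq_Ici (a := t)).symm, l1 (hδ.trans ht)]
  calc ∫⁻ t in Ioi δ, ENNReal.ofReal (1 / t) ∂μ
      = ∫⁻ t in Ioi δ, ∫⁻ s, indicator (Ici t) (fun s : ℝ => ENNReal.ofReal (1 / s ^ 2)) s ∂volume ∂μ := by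
        exact setLIntegral_congr_fun_ae measurableSet_Ioi (ae_of_all _ stepA)
    _ = ∫⁻ s, ∫⁻ t in Ioi δ, indicator (Ici t) (fun s : ℝ => ENNReal.ofReal (1 / s ^ 2)) s ∂μ ∂volume := by
        apply lintegral_lintegral_swap
        have : (uncurry fun t s => indicator (Ici t) (fun s : ℝ => ENNReal.ofReal (1 / s ^ 2)) s)
            = fun q : ℝ × ℝ => indicator {q : ℝ × ℝ | q.1 ≤ q.2}
              (fun q : ℝ × ℝ => ENNReal.ofReal (1 / q.2 ^ 2)) q := by
          ext q
          by_cases h : q.1 ≤ q.2 <;>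
            simp [uncurry, indicator, h, mem_Ici, mem_setOf_eq]
        rw [this]
        exact (Measurable.indicator
          ((measurable_const.div (measurable_snd.pow_const 2)).ennreal_ofReal)
          (measurableSet_le measurable_fst measurable_snd)).aemeasurable
    _ = ∫⁻ s, ENNReal.ofReal (1 / s ^ 2) * μ (Ioc δ s) ∂volume := by
        congr 1; ext s
        have : (fun t : ℝ => indicator (Ici t) (fun s : ℝ => ENNReal.ofReal (1 / s ^ 2)) s)
            = fun t : ℝ => indicator (Iic s) (fun _ : ℝ => ENNReal.ofReal (1 / s ^ 2)) t := by
          ext t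
          by_cases h : t ≤ s <;> simp [indicator, h, mem_Ici, mem_Iic]
        rw [this, lintegral_indicator_const measurableSet_Iic,
          Measure.restrict_apply measurableSet_Iic, inter_comm, Ioi_inter_Iic]
    _ = ∫⁻ s, indicator (Ioi δ) (fun s => ENNReal.ofReal ((F s - F δ) / s ^ 2)) s ∂volume := by
        congr 1; ext s
        rw [StieltjesFunction.measure_Ioc]
        by_cases h : δ < s
        · have hs0 : (0:ℝ) < s := hδ.trans h
          rw [Set.indicator_of_mem (show s ∈ Ioi δ from h),
            ← ENNReal.ofReal_mul (by positivity : (0:ℝ) ≤ 1 / s ^ 2), one_div_mul_eq_div]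
        · rw [Set.indicator_of_notMem (show s ∉ Ioi δ from h)]
          have : F s - F δ ≤ 0 := sub_nonpos.2 (F.mono (le_of_not_gt h))
          rw [ENNReal.ofReal_eq_zero.2 this, mul_zero]
    _ = ∫⁻ s in Ioi δ, ENNReal.ofReal ((F s - F δ) / s ^ 2) :=
        lintegral_indicator measurableSet_Ioi _

/-- Let `Φ : [0,∞] → [0,∞]` be non-decreasing and finite on `[0,∞)`
(modelled as a non-decreasing non-negative real function on `[0,∞)`), `p ∈ (0,∞)`,
`Φ_p(t) = Φ(t^p)`, `H_p(t) = log Φ_p(t)`, `t₀ = sup{ t : Φ_p(t) = 0 }` and `δ > t₀`.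
Then `∫_δ^∞ dH_p(t)/t = ∞` (the Lebesgue–Stieltjes integral, represented via any
monotone `G` agreeing on `(t₀,∞)` with the right-continuous modification of `H_p`)
holds if and only if `∫_δ^∞ H_p(t) dt/t² = ∞`. -/
theorem stmt_4 (Φ : ℝ → ℝ) (hΦmono : MonotoneOn Φ (Set.Ici 0))
    (hΦnonneg : ∀ t : ℝ, 0 ≤ t → 0 ≤ Φ t)
    (p : ℝ) (hp : 0 < p)
    (Hp : ℝ → ℝ) (hHp : Hp = fun t : ℝ => Real.log (Φ (t ^ p)))
    (t₀ : ℝ) (ht₀ : t₀ = sSup {t : ℝ | 0 ≤ t ∧ Φ (t ^ p) = 0})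
    (δ : ℝ) (hδ : t₀ < δ)
    (G : ℝ → ℝ) (hGmono : Monotone G)
    (hGH : ∀ t : ℝ, t₀ < t → G t = Function.rightLim Hp t) :
    (∫⁻ t in Set.Ioi δ, ENNReal.ofReal (1 / t) ∂(hGmono.stieltjesFunction.measure) = ∞)
      ↔ ∫⁻ t in Set.Ioi δ, ENNReal.ofReal (Hp t / t ^ 2) = ∞ := by
  set F := hGmono.stieltjesFunction with hFdef
  have hFeq : ∀ x, F x = rightLim G x := hGmono.stieltjesFunction_eq
  have ht₀0 : 0 ≤ t₀ := by
    rw [ht₀]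
    by_cases hb : BddAbove {t : ℝ | 0 ≤ t ∧ Φ (t ^ p) = 0}
    · rcases Set.eq_empty_or_nonempty {t : ℝ | 0 ≤ t ∧ Φ (t ^ p) = 0} with he | ⟨x, hx⟩
      · rw [he, Real.sSup_empty]
      · exact le_trans hx.1 (le_csSup hb hx)
    · rw [Real.sSup_of_not_bddAbove hb]
  have hδ0 : 0 < δ := lt_of_le_of_lt ht₀0 hδ
  by_cases hpos : ∀ t, t₀ < t → 0 < Φ (t ^ p)
  · -- main case
    have hHpmono : MonotoneOn Hp (Ioi t₀) := by
      intro a ha b hb hab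
      have ha0 : 0 < a := lt_of_le_of_lt ht₀0 ha
      rw [hHp]
      exact Real.log_le_log (hpos a ha)
        (hΦmono (Real.rpow_nonneg ha0.le p) (Real.rpow_nonneg (ha0.trans_le hab).le p)
          (Real.rpow_le_rpow ha0.le hab hp.le))
    set δ' := (t₀ + δ) / 2 with hδ'def
    have hδ'1 : t₀ < δ' := by rw [hδ'def]; linarith
    have hδ'2 : δ' < δ := by rw [hδ'def]; linarith
    set g : ℝ → ℝ := fun s => Hp (max s δ') with hg
    have hgmono : Monotone g := fun a b hab =>
      hHpmono (lt_of_lt_of_le hδ'1 (le_max_right _ _))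
        (lt_of_lt_of_le hδ'1 (le_max_right _ _)) (max_le_max hab le_rfl)
    have hgeq : ∀ u : ℝ, δ' ≤ u → g u = Hp u := by
      intro u hu
      rw [hg]; simp only; rw [max_eq_left hu]
    have hGg : ∀ s, δ' ≤ s → G s = rightLim g s := by
      intro s hs
      rw [hGH s (lt_of_lt_of_le hδ'1 hs),
        hgmono.rightLim_eq_sInf]
      refine (rightLim_eq_of_tendsto ?_)
      refine Tendsto.congr' ?_ (hgmono.tendsto_nhdsGT s)
      filter_upwards [self_mem_nhdsWithin] with u hu
      exact (hgeq u (hs.trans (le_of_lt hu)))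
    have hkey : ∀ s, δ < s → ContinuousAt g s → F s = Hp s := by
      intro s hs hc
      have hs' : δ' < s := hδ'2.trans hs
      have htd : Tendsto g (𝓝[>] s) (𝓝 (g s)) := hc.tendsto.mono_left nhdsWithin_le_nhds
      have hrg : rightLim g s = g s :=
        rightLim_eq_of_tendsto htd
      have hGs : G s = Hp s := by rw [hGg s hs'.le, hrg, hgeq s hs'.le]
      rw [hFeq]
      refine le_antisymm ?_ (hGs ▸ hGmono.le_rightLim le_rfl)
      have hub : ∀ᶠ u in 𝓝[>] s, rightLim G s ≤ g u := by
        filter_upwards [self_mem_nhdsWithin] with u hu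
        have hu' : s < u := hu
        have h1 : rightLim G s ≤ G ((s + u) / 2) := hGmono.rightLim_le (by linarith)
        have h2 : G ((s + u) / 2) = rightLim g ((s + u) / 2) := hGg _ (by linarith)
        have h3 : rightLim g ((s + u) / 2) ≤ g u := hgmono.rightLim_le (by linarith)
        linarith
      have h4 := ge_of_tendsto htd hub
      rwa [hgeq s hs'.le] at h4
    have hC : volume {x : ℝ | ¬ContinuousAt g x} = 0 :=
      hgmono.countable_not_continuousAt.measure_zero _
    have hRW : ∫⁻ t in Set.Ioi δ, ENNReal.ofReal (Hp t / t ^ 2)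
        = ∫⁻ t in Set.Ioi δ, ENNReal.ofReal (F t / t ^ 2) := by
      refine setLIntegral_congr_fun_ae measurableSet_Ioi ?_
      filter_upwards [measure_eq_zero_iff_ae_notMem.1 hC] with t ht hti
      rw [hkey t hti (not_not.1 ht)]
    rw [l3 F hδ0, hRW]
    exact l2 hδ0 (F δ) F.mono.measurable
  · -- degenerate case
    push_neg at hpos
    obtain ⟨t, htt₀, htle⟩ := hpos
    have ht0 : 0 ≤ t := ht₀0.trans htt₀.le
    have htz : Φ (t ^ p) = 0 := le_antisymm htle (hΦnonneg _ (Real.rpow_nonneg ht0 p))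
    have hnb : ¬BddAbove {u : ℝ | 0 ≤ u ∧ Φ (u ^ p) = 0} := by
      intro hb
      exact absurd htt₀ (not_lt.2 (ht₀ ▸ le_csSup hb ⟨ht0, htz⟩))
    have hall : ∀ u : ℝ, 0 ≤ u → Φ u = 0 := by
      intro u hu
      obtain ⟨s, hsS, hs⟩ := not_bddAbove_iff.1 hnb (u ^ (1 / p))
      refine le_antisymm ?_ (hΦnonneg _ hu)
      have hup : u ≤ s ^ p := by
        have h1 : (u ^ (1 / p)) ^ p ≤ s ^ p :=
          Real.rpow_le_rpow (Real.rpow_nonneg hu _) hs.le hp.le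
        rwa [← Real.rpow_mul hu, one_div_mul_cancel hp.ne', Real.rpow_one] at h1
      calc Φ u ≤ Φ (s ^ p) := hΦmono hu (Real.rpow_nonneg hsS.1 p) hup
        _ = 0 := hsS.2
    have hHp0 : ∀ s : ℝ, 0 < s → Hp s = 0 := by
      intro s hs
      rw [hHp]
      simp only
      rw [hall _ (Real.rpow_nonneg hs.le p), Real.log_zero]
    have hG0 : ∀ u : ℝ, t₀ < u → G u = 0 := by
      intro u hu
      have hu0 : 0 < u := lt_of_le_of_lt ht₀0 hu
      rw [hGH u hu]
      refine rightLim_eq_of_tendsto ?_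
      refine Tendsto.congr' ?_ tendsto_const_nhds
      filter_upwards [self_mem_nhdsWithin] with s hs
      exact (hHp0 s (hu0.trans hs)).symm
    have hF0 : ∀ u : ℝ, t₀ < u → F u = 0 := by
      intro u hu
      rw [hFeq]
      refine rightLim_eq_of_tendsto ?_
      refine Tendsto.congr' ?_ tendsto_const_nhds
      filter_upwards [self_mem_nhdsWithin] with s hs
      exact (hG0 s (hu.trans hs)).symm
    have hμ : F.measure (Ioi δ) = 0 := by
      have hsub : Ioi δ ⊆ ⋃ n : ℕ, Ioc δ (δ + (n + 1)) := by
        intro x hx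
        obtain ⟨n, hn⟩ := exists_nat_ge (x - δ)
        exact mem_iUnion.2 ⟨n, hx, by linarith⟩
      refine le_antisymm ?_ zero_le
      refine le_trans (measure_mono hsub) (le_trans (measure_iUnion_le _) ?_)
      have hz : ∀ n : ℕ, F.measure (Ioc δ (δ + (n + 1))) = 0 := by
        intro n
        rw [StieltjesFunction.measure_Ioc, hF0 _ hδ, hF0 _ (by linarith)]
        simp
      simp [hz]
    have hL : ∫⁻ t in Set.Ioi δ, ENNReal.ofReal (1 / t) ∂F.measure = 0 := by
      rw [Measure.restrict_eq_zero.2 hμ, lintegral_zero_measure]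
    have hR : ∫⁻ t in Set.Ioi δ, ENNReal.ofReal (Hp t / t ^ 2) = 0 := by
      rw [setLIntegral_congr_fun_ae measurableSet_Ioi
        (ae_of_all _ fun s hs => by rw [hHp0 s (hδ0.trans hs), zero_div, ENNReal.ofReal_zero]),
        lintegral_zero]
    rw [hL, hR]
end

section
/- Let Φ : [0,∞] → [0,∞] be a non-decreasing function which is finite on [0,∞), let p ∈ (0,∞), and set Φ_p(t) = Φ(t^p), H_p(t) = log Φ_p(t), with H_p⁻¹(η) = inf{ t : H_p(t) ≥ η }. Let t₀ = sup{ t : Φ_p(t) = 0 }. Then ∫_δ^∞ H_p(t) dt/t² = ∞ for some δ > t₀ if and only if ∫_{δ*}^∞ dη/H_p⁻¹(η) = ∞ for some δ* > H_p(+0), where H_p(+0) denotes the limit of H_p(t) as t → 0⁺. -/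
open MeasureTheory Set
open scoped ENNReal


lemma aux_top_of_le_mul {x y c : ℝ≥0∞} (h : x ≤ c * y) (hx : x = ⊤) (hc : c ≠ ⊤) : y = ⊤ := by
  by_contra hy
  exact ENNReal.mul_ne_top hc hy (top_le_iff.1 (hx ▸ h))

lemma aux_top_of_le_add {x y d : ℝ≥0∞} (h : x ≤ y + d) (hx : x = ⊤) (hd : d ≠ ⊤) : y = ⊤ := by
  rw [hx, top_le_iff] at h
  rcases ENNReal.add_eq_top.1 h with h2 | h2
  · exact h2
  · exact absurd h2 hd

lemma aux_geom (k N : ℕ) : ∑ n ∈ Finset.Ico (k+1) N, ((2:ℝ≥0∞))⁻¹^n ≤ 2⁻¹^k := by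
  rw [Finset.sum_Ico_eq_sum_range]
  calc ∑ m ∈ Finset.range (N-(k+1)), ((2:ℝ≥0∞))⁻¹^(k+1+m)
      ≤ ∑' m : ℕ, ((2:ℝ≥0∞))⁻¹^(k+1+m) := ENNReal.sum_le_tsum _
    _ = 2⁻¹^(k+1) * ∑' m : ℕ, ((2:ℝ≥0∞))⁻¹^m := by
        simp_rw [pow_add]; exact ENNReal.tsum_mul_left
    _ = 2⁻¹^k := by
        rw [ENNReal.tsum_geometric, pow_succ]
        have h1 : ((1:ℝ≥0∞) - 2⁻¹)⁻¹ = 2 := by simp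
        have h2 : (2:ℝ≥0∞)⁻¹ * 2 = 1 := ENNReal.inv_mul_cancel two_ne_zero ENNReal.ofNat_ne_top
        rw [h1, mul_assoc, h2, mul_one]

lemma aux_S_le (e : ℕ → ℝ≥0∞) :
    ∑' n, (∑ k ∈ Finset.range n, e k) * 2⁻¹ ^ n ≤ 2 * ∑' n, e n * 2⁻¹ ^ n := by
  rw [ENNReal.tsum_eq_iSup_nat]
  refine iSup_le fun N => ?_
  have swap : ∑ n ∈ Finset.range N, (∑ k ∈ Finset.range n, e k) * 2⁻¹^n
      = ∑ k ∈ Finset.range N, ∑ n ∈ Finset.Ico (k+1) N, e k * (2:ℝ≥0∞)⁻¹^n := by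
    simp_rw [Finset.sum_mul]
    exact Finset.sum_comm' (fun n k => by
      simp only [Finset.mem_range, Finset.mem_Ico]; omega)
  rw [swap]
  calc ∑ k ∈ Finset.range N, ∑ n ∈ Finset.Ico (k+1) N, e k * (2:ℝ≥0∞)⁻¹^n
      = ∑ k ∈ Finset.range N, e k * ∑ n ∈ Finset.Ico (k+1) N, (2:ℝ≥0∞)⁻¹^n := by
        simp_rw [Finset.mul_sum]
    _ ≤ ∑ k ∈ Finset.range N, e k * 2⁻¹^k :=
        Finset.sum_le_sum fun k _ => mul_le_mul_right (aux_geom k N) _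
    _ ≤ ∑' k, e k * 2⁻¹^k := ENNReal.sum_le_tsum _
    _ ≤ 2 * ∑' k, e k * 2⁻¹^k := le_mul_of_one_le_left' one_le_two

lemma aux_e_le (e : ℕ → ℝ≥0∞) :
    ∑' n, e n * 2⁻¹^n ≤ 2 * ∑' n, (∑ k ∈ Finset.range n, e k) * 2⁻¹ ^ n := by
  have h2 : (2:ℝ≥0∞) * 2⁻¹ = 1 := ENNReal.mul_inv_cancel two_ne_zero ENNReal.ofNat_ne_top
  have h : ∀ n, e n * 2⁻¹^n ≤ 2 * ((∑ k ∈ Finset.range (n+1), e k) * 2⁻¹^(n+1)) := by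
    intro n
    have h1 : e n ≤ ∑ k ∈ Finset.range (n+1), e k :=
      Finset.single_le_sum (f := e) (fun i _ => zero_le) (Finset.self_mem_range_succ n)
    have h3 : (2:ℝ≥0∞) * 2⁻¹^(n+1) = 2⁻¹^n := by
      rw [pow_succ, mul_comm ((2:ℝ≥0∞)⁻¹^n), ← mul_assoc, h2, one_mul]
    calc e n * 2⁻¹^n = 2 * (e n * 2⁻¹^(n+1)) := by rw [mul_left_comm, h3]
      _ ≤ 2 * ((∑ k ∈ Finset.range (n+1), e k) * 2⁻¹^(n+1)) := by
          exact mul_le_mul_right (mul_le_mul_left h1 _) _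
  calc ∑' n, e n * 2⁻¹^n
      ≤ ∑' n, 2 * ((∑ k ∈ Finset.range (n+1), e k) * 2⁻¹^(n+1)) := ENNReal.tsum_le_tsum h
    _ = 2 * ∑' n, (fun m => (∑ k ∈ Finset.range m, e k) * 2⁻¹^m) (n+1) := ENNReal.tsum_mul_left
    _ ≤ 2 * ∑' m, (∑ k ∈ Finset.range m, e k) * 2⁻¹^m :=
        mul_le_mul_right (ENNReal.tsum_comp_le_tsum_of_injective Nat.succ_injective _) _

lemma aux_sum_iff (e : ℕ → ℝ≥0∞) :
    (∑' n, (∑ k ∈ Finset.range n, e k) * 2⁻¹ ^ n = ⊤) ↔ (∑' n, e n * 2⁻¹ ^ n = ⊤) := by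
  constructor
  · intro h; exact aux_top_of_le_mul (aux_S_le e) h ENNReal.ofNat_ne_top
  · intro h; exact aux_top_of_le_mul (aux_e_le e) h ENNReal.ofNat_ne_top

lemma aux_mono_set {s : Set ℝ} (hs : MeasurableSet s) {f g : ℝ → ℝ≥0∞}
    (h : ∀ x ∈ s, f x ≤ g x) : ∫⁻ x in s, f x ≤ ∫⁻ x in s, g x := by
  rw [← lintegral_indicator hs, ← lintegral_indicator hs]
  refine lintegral_mono fun x => ?_
  by_cases hx : x ∈ s
  · simpa [Set.indicator_of_mem hx] using h x hx
  · simp [Set.indicator_of_notMem hx]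

lemma aux_upper {s : Set ℝ} (hs : MeasurableSet s) {f : ℝ → ℝ≥0∞} {C : ℝ≥0∞}
    (h : ∀ x ∈ s, f x ≤ C) : ∫⁻ x in s, f x ≤ C * volume s :=
  (aux_mono_set hs h).trans_eq (setLIntegral_const s C)

lemma aux_lower {s : Set ℝ} (hs : MeasurableSet s) {f : ℝ → ℝ≥0∞} {C : ℝ≥0∞}
    (h : ∀ x ∈ s, C ≤ f x) : C * volume s ≤ ∫⁻ x in s, f x :=
  (setLIntegral_const s C).symm.trans_le (aux_mono_set hs h)

lemma aux_split {a b : ℝ} (h : a ≤ b) (f : ℝ → ℝ≥0∞) :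
    ∫⁻ x in Ioi a, f x = (∫⁻ x in Ioc a b, f x) + ∫⁻ x in Ioi b, f x := by
  rw [← Ioc_union_Ioi_eq_Ioi h,
    Measure.restrict_union (Set.Ioc_disjoint_Ioi le_rfl) measurableSet_Ioi,
    lintegral_add_measure]

lemma aux_pairwise_Ioc (a : ℕ → ℝ) (ha : Monotone a) :
    Pairwise (Function.onFun Disjoint fun n => Ioc (a n) (a (n+1))) := by
  have key : ∀ m n : ℕ, m < n → Disjoint (Ioc (a m) (a (m+1))) (Ioc (a n) (a (n+1))) := by
    intro m n hmn
    refine Set.disjoint_left.2 fun x hx1 hx2 => ?_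
    have h1 : x ≤ a (m+1) := hx1.2
    have h2 : a n < x := hx2.1
    exact absurd (h1.trans (ha hmn)) (not_le.2 h2)
  intro m n hmn
  rcases hmn.lt_or_gt with h | h
  · exact key m n h
  · exact (key n m h).symm

lemma aux_iUnion_Ioc {δ : ℝ} (hδ : 0 < δ) :
    Ioi δ = ⋃ n : ℕ, Ioc (δ * 2^n) (δ * 2^(n+1)) := by
  ext t
  simp only [mem_Ioi, mem_iUnion, mem_Ioc]
  constructor
  · intro ht
    have hex : ∃ n : ℕ, t ≤ δ * 2^(n+1) := by
      obtain ⟨n, hn⟩ := pow_unbounded_of_one_lt (t/δ) (one_lt_two (α := ℝ))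
      refine ⟨n, ?_⟩
      have h1 : t / δ ≤ 2^(n+1) :=
        hn.le.trans (pow_le_pow_right₀ one_le_two (Nat.le_succ n))
      calc t = δ * (t / δ) := by field_simp
        _ ≤ δ * 2^(n+1) := by
            exact mul_le_mul_of_nonneg_left h1 hδ.le
    refine ⟨Nat.find hex, ?_, Nat.find_spec hex⟩
    rcases Nat.eq_zero_or_eq_succ_pred (Nat.find hex) with h0 | hsucc
    · rw [h0]; simpa using ht
    · have hmin := Nat.find_min hex (m := (Nat.find hex).pred) (by rw [hsucc]; exact Nat.lt_succ_self _)
      rw [hsucc]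
      exact not_le.mp hmin
  · rintro ⟨n, h1, _⟩
    have h2 : (1:ℝ) ≤ 2^n := one_le_pow₀ one_le_two
    exact (le_mul_of_one_le_right hδ.le h2).trans_lt h1

lemma aux_pow_half (n : ℕ) : (2:ℝ≥0∞) * 2⁻¹^(n+1) = 2⁻¹^n := by
  have h2 : (2:ℝ≥0∞) * 2⁻¹ = 1 := ENNReal.mul_inv_cancel two_ne_zero ENNReal.ofNat_ne_top
  rw [pow_succ, mul_comm ((2:ℝ≥0∞)⁻¹^n), ← mul_assoc, h2, one_mul]

lemma aux_ofReal_half_pow (n : ℕ) : ENNReal.ofReal ((2⁻¹:ℝ)^n) = 2⁻¹^n := by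
  rw [ENNReal.ofReal_pow (by norm_num)]
  congr 1
  rw [ENNReal.ofReal_inv_of_pos two_pos]
  norm_num

lemma aux_ofReal_inv_T {δ : ℝ} (hδ : 0 < δ) (n : ℕ) :
    ENNReal.ofReal (1/(δ*2^n)) = ENNReal.ofReal δ⁻¹ * 2⁻¹^n := by
  rw [one_div, mul_inv, ← inv_pow, ENNReal.ofReal_mul (inv_nonneg.2 hδ.le),
    aux_ofReal_half_pow]

lemma aux_shift (f : ℕ → ℝ≥0∞) : ∑' n, f (n+1) * 2⁻¹^n ≤ 2 * ∑' n, f n * 2⁻¹^n := by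
  calc ∑' n, f (n+1) * 2⁻¹^n
      = ∑' n, 2 * (f (n+1) * 2⁻¹^(n+1)) := by
        refine tsum_congr fun n => ?_
        rw [mul_left_comm, aux_pow_half]
    _ = 2 * ∑' n, (fun m => f m * 2⁻¹^m) (n+1) := ENNReal.tsum_mul_left
    _ ≤ 2 * ∑' m, f m * 2⁻¹^m :=
        mul_le_mul_right (ENNReal.tsum_comp_le_tsum_of_injective Nat.succ_injective _) _

lemma partA (H : ℝ → ℝ) (δ : ℝ) (hδ : 0 < δ)
    (hHmono : ∀ s t : ℝ, δ ≤ s → s ≤ t → H s ≤ H t) :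
    ((∫⁻ t in Ioi δ, ENNReal.ofReal (H t / t ^ 2)) = ⊤ ↔
      (∑' n : ℕ, ENNReal.ofReal (max (H (δ * 2 ^ n)) 0) * 2⁻¹ ^ n) = ⊤) := by
  have hTpos : ∀ n : ℕ, 0 < δ * 2 ^ n := fun n => mul_pos hδ (pow_pos two_pos n)
  have hTδ : ∀ n : ℕ, δ ≤ δ * 2 ^ n := fun n =>
    le_mul_of_one_le_right hδ.le (one_le_pow₀ one_le_two)
  have hTmono : Monotone (fun n : ℕ => δ * 2 ^ n) := fun m n h =>
    mul_le_mul_of_nonneg_left (pow_le_pow_right₀ one_le_two h) hδ.le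
  have hdec : (∫⁻ t in Ioi δ, ENNReal.ofReal (H t / t ^ 2))
      = ∑' n : ℕ, ∫⁻ t in Ioc (δ * 2 ^ n) (δ * 2 ^ (n+1)), ENNReal.ofReal (H t / t ^ 2) := by
    rw [aux_iUnion_Ioc hδ]
    exact lintegral_iUnion (fun n => measurableSet_Ioc) (aux_pairwise_Ioc _ hTmono) _
  have hup : ∀ n : ℕ, (∫⁻ t in Ioc (δ * 2 ^ n) (δ * 2 ^ (n+1)), ENNReal.ofReal (H t / t ^ 2))
      ≤ ENNReal.ofReal δ⁻¹ * (ENNReal.ofReal (max (H (δ * 2 ^ (n+1))) 0) * 2⁻¹ ^ n) := by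
    intro n
    have hb : ∀ t ∈ Ioc (δ * 2 ^ n) (δ * 2 ^ (n+1)),
        ENNReal.ofReal (H t / t ^ 2)
          ≤ ENNReal.ofReal (max (H (δ * 2 ^ (n+1))) 0 / (δ * 2 ^ n) ^ 2) := by
      intro t ht
      apply ENNReal.ofReal_le_ofReal
      have h1 : H t ≤ max (H (δ * 2 ^ (n+1))) 0 :=
        le_max_of_le_left (hHmono t _ ((hTδ n).trans ht.1.le) ht.2)
      have h2 : (δ * 2 ^ n) ^ 2 ≤ t ^ 2 := pow_le_pow_left₀ (hTpos n).le ht.1.le 2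
      exact div_le_div₀ (le_max_right _ _) h1 (pow_pos (hTpos n) 2) h2
    calc (∫⁻ t in Ioc (δ * 2 ^ n) (δ * 2 ^ (n+1)), ENNReal.ofReal (H t / t ^ 2))
        ≤ ENNReal.ofReal (max (H (δ * 2 ^ (n+1))) 0 / (δ * 2 ^ n) ^ 2)
            * volume (Ioc (δ * 2 ^ n) (δ * 2 ^ (n+1))) := aux_upper measurableSet_Ioc hb
      _ = ENNReal.ofReal δ⁻¹ * (ENNReal.ofReal (max (H (δ * 2 ^ (n+1))) 0) * 2⁻¹ ^ n) := by
          rw [Real.volume_Ioc,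
            ← ENNReal.ofReal_mul (div_nonneg (le_max_right _ _) (by positivity)),
            show max (H (δ * 2 ^ (n+1))) 0 / (δ * 2 ^ n) ^ 2 * (δ * 2 ^ (n+1) - δ * 2 ^ n)
              = δ⁻¹ * (max (H (δ * 2 ^ (n+1))) 0 * (2⁻¹:ℝ) ^ n) from by
                rw [inv_pow]
                field_simp
                ring,
            ENNReal.ofReal_mul (by positivity),
            ENNReal.ofReal_mul (le_max_right _ _), aux_ofReal_half_pow]
  have hlo : ∀ n : ℕ,
      ENNReal.ofReal (4 * δ)⁻¹ * (ENNReal.ofReal (max (H (δ * 2 ^ n)) 0) * 2⁻¹ ^ n)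
        ≤ (∫⁻ t in Ioc (δ * 2 ^ n) (δ * 2 ^ (n+1)), ENNReal.ofReal (H t / t ^ 2)) := by
    intro n
    have hb : ∀ t ∈ Ioc (δ * 2 ^ n) (δ * 2 ^ (n+1)),
        ENNReal.ofReal (max (H (δ * 2 ^ n)) 0 / (δ * 2 ^ (n+1)) ^ 2)
          ≤ ENNReal.ofReal (H t / t ^ 2) := by
      intro t ht
      rcases le_or_gt (H (δ * 2 ^ n)) 0 with h0 | h0
      · rw [max_eq_right h0]
        simp
      · rw [max_eq_left h0.le]
        apply ENNReal.ofReal_le_ofReal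
        have htpos : 0 < t := (hTpos n).trans ht.1
        have h1 : H (δ * 2 ^ n) ≤ H t := hHmono _ t (hTδ n) ht.1.le
        have h2 : t ^ 2 ≤ (δ * 2 ^ (n+1)) ^ 2 := pow_le_pow_left₀ htpos.le ht.2 2
        exact div_le_div₀ (h0.le.trans h1) h1 (pow_pos htpos 2) h2
    calc ENNReal.ofReal (4 * δ)⁻¹ * (ENNReal.ofReal (max (H (δ * 2 ^ n)) 0) * 2⁻¹ ^ n)
        = ENNReal.ofReal (max (H (δ * 2 ^ n)) 0 / (δ * 2 ^ (n+1)) ^ 2)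
            * volume (Ioc (δ * 2 ^ n) (δ * 2 ^ (n+1))) := by
          rw [Real.volume_Ioc,
            ← ENNReal.ofReal_mul (div_nonneg (le_max_right _ _) (by positivity)),
            show max (H (δ * 2 ^ n)) 0 / (δ * 2 ^ (n+1)) ^ 2 * (δ * 2 ^ (n+1) - δ * 2 ^ n)
              = (4 * δ)⁻¹ * (max (H (δ * 2 ^ n)) 0 * (2⁻¹:ℝ) ^ n) from by
                rw [inv_pow]
                field_simp
                ring,
            ENNReal.ofReal_mul (by positivity),
            ENNReal.ofReal_mul (le_max_right _ _), aux_ofReal_half_pow]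
      _ ≤ _ := aux_lower measurableSet_Ioc hb
  have hA_le : (∫⁻ t in Ioi δ, ENNReal.ofReal (H t / t ^ 2))
      ≤ (ENNReal.ofReal δ⁻¹ * 2) * ∑' n : ℕ, ENNReal.ofReal (max (H (δ * 2 ^ n)) 0) * 2⁻¹ ^ n := by
    rw [hdec]
    calc (∑' n : ℕ, ∫⁻ t in Ioc (δ * 2 ^ n) (δ * 2 ^ (n+1)), ENNReal.ofReal (H t / t ^ 2))
        ≤ ∑' n : ℕ, ENNReal.ofReal δ⁻¹
            * (ENNReal.ofReal (max (H (δ * 2 ^ (n+1))) 0) * 2⁻¹ ^ n) :=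
          ENNReal.tsum_le_tsum hup
      _ = ENNReal.ofReal δ⁻¹
            * ∑' n : ℕ, ENNReal.ofReal (max (H (δ * 2 ^ (n+1))) 0) * 2⁻¹ ^ n :=
          ENNReal.tsum_mul_left
      _ ≤ ENNReal.ofReal δ⁻¹
            * (2 * ∑' n : ℕ, ENNReal.ofReal (max (H (δ * 2 ^ n)) 0) * 2⁻¹ ^ n) :=
          mul_le_mul_right (aux_shift fun m => ENNReal.ofReal (max (H (δ * 2 ^ m)) 0)) _
      _ = (ENNReal.ofReal δ⁻¹ * 2) * ∑' n : ℕ, ENNReal.ofReal (max (H (δ * 2 ^ n)) 0) * 2⁻¹ ^ n := by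
          rw [mul_assoc]
  have hA_ge : ENNReal.ofReal (4 * δ)⁻¹
      * (∑' n : ℕ, ENNReal.ofReal (max (H (δ * 2 ^ n)) 0) * 2⁻¹ ^ n)
        ≤ (∫⁻ t in Ioi δ, ENNReal.ofReal (H t / t ^ 2)) := by
    rw [hdec, ← ENNReal.tsum_mul_left]
    exact ENNReal.tsum_le_tsum hlo
  constructor
  · intro hA
    exact aux_top_of_le_mul hA_le hA
      (ENNReal.mul_ne_top ENNReal.ofReal_ne_top ENNReal.ofNat_ne_top)
  · intro hS
    have h1 : ENNReal.ofReal (4 * δ)⁻¹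
        * (∑' n : ℕ, ENNReal.ofReal (max (H (δ * 2 ^ n)) 0) * 2⁻¹ ^ n) = ⊤ := by
      rw [hS, ENNReal.mul_top]
      exact (ENNReal.ofReal_pos.2 (by positivity)).ne'
    exact top_le_iff.1 (h1 ▸ hA_ge)

lemma partC (v : ℕ → ℝ) (hv : Monotone v) (c : ℝ) (hc0 : 0 ≤ c) (hvc : v 0 ≤ c) :
    ((∑' n : ℕ, ENNReal.ofReal (max (v (n+1)) c - max (v n) c) * 2⁻¹ ^ n) = ⊤ ↔
      (∑' n : ℕ, ENNReal.ofReal (max (v n) 0) * 2⁻¹ ^ n) = ⊤) := by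
  set G : ℕ → ℝ := fun n => max (v n) c with hG
  have hGmono : Monotone G := fun m n h => max_le_max (hv h) le_rfl
  have hG0 : G 0 = c := max_eq_right hvc
  have hGc : ∀ n, c ≤ G n := fun n => le_max_right _ _
  have htel : ∀ n : ℕ, ENNReal.ofReal (G n - c)
      = ∑ k ∈ Finset.range n, ENNReal.ofReal (G (k+1) - G k) := by
    intro n
    induction n with
    | zero => simp [hG0]
    | succ m ih =>
      rw [Finset.sum_range_succ, ← ih,
        ← ENNReal.ofReal_add (sub_nonneg.2 (hG0 ▸ hGmono (Nat.zero_le m)))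
          (sub_nonneg.2 (hGmono (Nat.le_succ m)))]
      congr 1
      ring
  have h1 : (∑' n : ℕ, ENNReal.ofReal (G (n+1) - G n) * 2⁻¹ ^ n = ⊤)
      ↔ (∑' n : ℕ, ENNReal.ofReal (G n - c) * 2⁻¹ ^ n = ⊤) := by
    have hEq : (∑' n : ℕ, ENNReal.ofReal (G n - c) * 2⁻¹ ^ n)
        = ∑' n : ℕ, (∑ k ∈ Finset.range n, ENNReal.ofReal (G (k+1) - G k)) * 2⁻¹ ^ n :=
      tsum_congr fun n => by rw [htel n]
    rw [hEq]
    exact (aux_sum_iff _).symm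
  have hle1 : ∀ n, ENNReal.ofReal (G n - c) ≤ ENNReal.ofReal (max (v n) 0) := by
    intro n
    apply ENNReal.ofReal_le_ofReal
    rw [sub_le_iff_le_add]
    exact max_le (le_add_of_le_of_nonneg (le_max_left _ _) hc0)
      (le_add_of_nonneg_of_le (le_max_right _ _) le_rfl)
  have hle2 : ∀ n, ENNReal.ofReal (max (v n) 0)
      ≤ ENNReal.ofReal (G n - c) + ENNReal.ofReal c := by
    intro n
    rw [← ENNReal.ofReal_add (sub_nonneg.2 (hGc n)) hc0]
    apply ENNReal.ofReal_le_ofReal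
    rw [sub_add_cancel]
    exact max_le_max le_rfl hc0
  have hSG_le : (∑' n : ℕ, ENNReal.ofReal (G n - c) * 2⁻¹ ^ n)
      ≤ ∑' n : ℕ, ENNReal.ofReal (max (v n) 0) * 2⁻¹ ^ n :=
    ENNReal.tsum_le_tsum fun n => mul_le_mul_left (hle1 n) _
  have hSU_le : (∑' n : ℕ, ENNReal.ofReal (max (v n) 0) * 2⁻¹ ^ n)
      ≤ (∑' n : ℕ, ENNReal.ofReal (G n - c) * 2⁻¹ ^ n) + ENNReal.ofReal c * 2 := by
    calc (∑' n : ℕ, ENNReal.ofReal (max (v n) 0) * 2⁻¹ ^ n)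
        ≤ ∑' n : ℕ, (ENNReal.ofReal (G n - c) * 2⁻¹ ^ n + ENNReal.ofReal c * 2⁻¹ ^ n) :=
          ENNReal.tsum_le_tsum fun n => by
            rw [← add_mul]; exact mul_le_mul_left (hle2 n) _
      _ = (∑' n : ℕ, ENNReal.ofReal (G n - c) * 2⁻¹ ^ n)
            + ∑' n : ℕ, ENNReal.ofReal c * 2⁻¹ ^ n := ENNReal.tsum_add
      _ = (∑' n : ℕ, ENNReal.ofReal (G n - c) * 2⁻¹ ^ n) + ENNReal.ofReal c * 2 := by
          rw [ENNReal.tsum_mul_left, ENNReal.tsum_geometric]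
          congr 2
          simp
  rw [h1]
  constructor
  · intro h
    exact top_le_iff.1 (h ▸ hSG_le)
  · intro h
    refine aux_top_of_le_add hSU_le h ?_
    exact ENNReal.mul_ne_top ENNReal.ofReal_ne_top ENNReal.ofNat_ne_top

lemma partB (Φ : ℝ → ℝ) (p : ℝ) (H J : ℝ → ℝ) (c δ : ℝ) (hδ : 0 < δ)
    (hstrong : ∀ s t : ℝ, 0 ≤ s → s ≤ t → δ ≤ t → Φ (s ^ p) ≠ 0 → H s ≤ H t)
    (hne : ∀ t : ℝ, δ ≤ t → Φ (t ^ p) ≠ 0)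
    (hc : c = max (H δ) 0)
    (hJ : ∀ η : ℝ, J η = sInf {s : ℝ | 0 ≤ s ∧ Φ (s ^ p) ≠ 0 ∧ η ≤ H s}) :
    ((∫⁻ η in Ioi c, ENNReal.ofReal (1 / J η)) = ⊤ ↔
      (∑' n : ℕ, ENNReal.ofReal (max (H (δ * 2 ^ (n+1))) c - max (H (δ * 2 ^ n)) c)
        * 2⁻¹ ^ n) = ⊤) := by
  have hTpos : ∀ n : ℕ, 0 < δ * 2 ^ n := fun n => mul_pos hδ (pow_pos two_pos n)
  have hTδ : ∀ n : ℕ, δ ≤ δ * 2 ^ n := fun n =>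
    le_mul_of_one_le_right hδ.le (one_le_pow₀ one_le_two)
  have hTsucc : ∀ n : ℕ, δ * 2 ^ n ≤ δ * 2 ^ (n+1) := fun n =>
    mul_le_mul_of_nonneg_left (pow_le_pow_right₀ one_le_two (Nat.le_succ n)) hδ.le
  have hHmono : ∀ s t : ℝ, δ ≤ s → s ≤ t → H s ≤ H t := fun s t hs hst =>
    hstrong s t (hδ.le.trans hs) hst (hs.trans hst) (hne s hs)
  set G : ℕ → ℝ := fun n => max (H (δ * 2 ^ n)) c with hG
  have hGmono : Monotone G := monotone_nat_of_le_succ fun n =>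
    max_le_max (hHmono _ _ (hTδ n) (hTsucc n)) le_rfl
  have hGc : ∀ n, c ≤ G n := fun n => le_max_right _ _
  have hHδc : H δ ≤ c := hc ▸ le_max_left _ _
  have hG0 : G 0 = c := by
    have : δ * 2 ^ (0:ℕ) = δ := by ring
    rw [hG]
    simp only [this]
    exact max_eq_right hHδc
  -- basic J facts
  have hJ_ge : ∀ η a : ℝ, δ ≤ a → H a < η →
      {s : ℝ | 0 ≤ s ∧ Φ (s ^ p) ≠ 0 ∧ η ≤ H s}.Nonempty → a ≤ J η := by
    intro η a ha hηa hne'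
    rw [hJ]
    refine le_csInf hne' fun s hs => ?_
    by_contra hlt
    push_neg at hlt
    have h1 : H s ≤ H a := hstrong s a hs.1 hlt.le ha hs.2.1
    exact absurd (hs.2.2.trans h1) (not_le.2 hηa)
  have hJ_int_le : ∀ η a : ℝ, δ ≤ a → H a < η →
      ENNReal.ofReal (1 / J η) ≤ ENNReal.ofReal (1 / a) := by
    intro η a ha hηa
    rcases Set.eq_empty_or_nonempty {s : ℝ | 0 ≤ s ∧ Φ (s ^ p) ≠ 0 ∧ η ≤ H s} with hemp | hne'
    · rw [hJ, hemp, Real.sInf_empty]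
      simp
    · exact ENNReal.ofReal_le_ofReal
        (one_div_le_one_div_of_le (hδ.trans_le ha) (hJ_ge η a ha hηa hne'))
  have hJ_int_ge : ∀ (η : ℝ) (n : ℕ), G n < η → η ≤ H (δ * 2 ^ (n+1)) →
      ENNReal.ofReal (1 / (δ * 2 ^ (n+1))) ≤ ENNReal.ofReal (1 / J η) := by
    intro η n hn hn1
    have hmem : (δ * 2 ^ (n+1)) ∈ {s : ℝ | 0 ≤ s ∧ Φ (s ^ p) ≠ 0 ∧ η ≤ H s} :=
      ⟨(hTpos (n+1)).le, hne _ (hTδ (n+1)), hn1⟩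
    have hub : J η ≤ δ * 2 ^ (n+1) := by
      rw [hJ]
      exact csInf_le ⟨0, fun x hx => hx.1⟩ hmem
    have hlb : δ * 2 ^ n ≤ J η :=
      hJ_ge η (δ * 2 ^ n) (hTδ n) ((le_max_left _ _).trans_lt hn) ⟨_, hmem⟩
    exact ENNReal.ofReal_le_ofReal
      (one_div_le_one_div_of_le ((hTpos n).trans_le hlb) hub)
  -- decomposition of Ioi c
  have hUmeas : MeasurableSet (⋃ n : ℕ, Ioc (G n) (G (n+1))) :=
    MeasurableSet.iUnion fun n => measurableSet_Ioc
  have hUsub : (⋃ n : ℕ, Ioc (G n) (G (n+1))) ⊆ Ioi c :=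
    Set.iUnion_subset fun n x hx => (hGc n).trans_lt hx.1
  have hsplit : (∫⁻ η in Ioi c, ENNReal.ofReal (1 / J η))
      = (∫⁻ η in ⋃ n : ℕ, Ioc (G n) (G (n+1)), ENNReal.ofReal (1 / J η))
        + ∫⁻ η in Ioi c \ ⋃ n : ℕ, Ioc (G n) (G (n+1)), ENNReal.ofReal (1 / J η) := by
    have h := lintegral_add_measure (fun η => ENNReal.ofReal (1 / J η))
      (volume.restrict (⋃ n : ℕ, Ioc (G n) (G (n+1))))
      (volume.restrict (Ioi c \ ⋃ n : ℕ, Ioc (G n) (G (n+1))))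
    rw [← Measure.restrict_union Set.disjoint_sdiff_right (measurableSet_Ioi.diff hUmeas),
      Set.union_diff_cancel hUsub] at h
    exact h
  have hrest0 : (∫⁻ η in Ioi c \ ⋃ n : ℕ, Ioc (G n) (G (n+1)),
      ENNReal.ofReal (1 / J η)) = 0 := by
    have hrest : ∀ η ∈ Ioi c \ ⋃ n : ℕ, Ioc (G n) (G (n+1)),
        ENNReal.ofReal (1 / J η) ≤ 0 := by
      intro η hη
      have hη2 : ∀ n, G n < η := by
        intro n
        induction n with
        | zero => rw [hG0]; exact hη.1
        | succ m ih =>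
          by_contra hle
          push_neg at hle
          exact hη.2 (Set.mem_iUnion.2 ⟨m, ⟨ih, hle⟩⟩)
      have hempty : {s : ℝ | 0 ≤ s ∧ Φ (s ^ p) ≠ 0 ∧ η ≤ H s} = ∅ := by
        rw [Set.eq_empty_iff_forall_notMem]
        rintro s ⟨hs0, hsne, hsη⟩
        obtain ⟨m, hm⟩ := pow_unbounded_of_one_lt (s / δ) (one_lt_two (α := ℝ))
        have hsm : s ≤ δ * 2 ^ m := by
          rw [div_lt_iff₀ hδ] at hm
          nlinarith [hm]
        have h1 : H s ≤ H (δ * 2 ^ m) := hstrong s _ hs0 hsm (hTδ m) hsne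
        have h2 : H (δ * 2 ^ m) ≤ G m := le_max_left _ _
        linarith [hη2 m, hsη]
      rw [hJ, hempty, Real.sInf_empty]
      simp
    have := aux_upper (measurableSet_Ioi.diff hUmeas) hrest
    simpa using this
  have hUdec : (∫⁻ η in ⋃ n : ℕ, Ioc (G n) (G (n+1)), ENNReal.ofReal (1 / J η))
      = ∑' n : ℕ, ∫⁻ η in Ioc (G n) (G (n+1)), ENNReal.ofReal (1 / J η) :=
    lintegral_iUnion (fun n => measurableSet_Ioc) (aux_pairwise_Ioc G hGmono) _
  -- piece bounds
  have hup : ∀ n : ℕ, (∫⁻ η in Ioc (G n) (G (n+1)), ENNReal.ofReal (1 / J η))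
      ≤ ENNReal.ofReal δ⁻¹ * (ENNReal.ofReal (G (n+1) - G n) * 2⁻¹ ^ n) := by
    intro n
    have hb : ∀ η ∈ Ioc (G n) (G (n+1)),
        ENNReal.ofReal (1 / J η) ≤ ENNReal.ofReal (1 / (δ * 2 ^ n)) := fun η hη =>
      hJ_int_le η (δ * 2 ^ n) (hTδ n) ((le_max_left _ _).trans_lt hη.1)
    calc (∫⁻ η in Ioc (G n) (G (n+1)), ENNReal.ofReal (1 / J η))
        ≤ ENNReal.ofReal (1 / (δ * 2 ^ n)) * volume (Ioc (G n) (G (n+1))) :=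
          aux_upper measurableSet_Ioc hb
      _ = ENNReal.ofReal δ⁻¹ * (ENNReal.ofReal (G (n+1) - G n) * 2⁻¹ ^ n) := by
          rw [Real.volume_Ioc, aux_ofReal_inv_T hδ]
          ring
  have hlo : ∀ n : ℕ,
      (ENNReal.ofReal δ⁻¹ * 2⁻¹) * (ENNReal.ofReal (G (n+1) - G n) * 2⁻¹ ^ n)
        ≤ (∫⁻ η in Ioc (G n) (G (n+1)), ENNReal.ofReal (1 / J η)) := by
    intro n
    have hb : ∀ η ∈ Ioc (G n) (G (n+1)),
        ENNReal.ofReal (1 / (δ * 2 ^ (n+1))) ≤ ENNReal.ofReal (1 / J η) := by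
      intro η hη
      have hηc : c < η := (hGc n).trans_lt hη.1
      have hηH : η ≤ H (δ * 2 ^ (n+1)) := by
        rcases max_cases (H (δ * 2 ^ (n+1))) c with ⟨he, _⟩ | ⟨he, _⟩
        · exact hη.2.trans_eq (by rw [hG] at *; exact he)
        · exfalso
          have : η ≤ c := hη.2.trans_eq (by rw [hG] at *; exact he)
          exact absurd this (not_le.2 hηc)
      exact hJ_int_ge η n hη.1 hηH
    calc (ENNReal.ofReal δ⁻¹ * 2⁻¹) * (ENNReal.ofReal (G (n+1) - G n) * 2⁻¹ ^ n)
        = ENNReal.ofReal (1 / (δ * 2 ^ (n+1))) * volume (Ioc (G n) (G (n+1))) := by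
          rw [Real.volume_Ioc, aux_ofReal_inv_T hδ, pow_succ]
          ring
      _ ≤ _ := aux_lower measurableSet_Ioc hb
  -- assembling
  have hB_le : (∫⁻ η in Ioi c, ENNReal.ofReal (1 / J η))
      ≤ ENNReal.ofReal δ⁻¹ * ∑' n : ℕ, ENNReal.ofReal (G (n+1) - G n) * 2⁻¹ ^ n := by
    rw [hsplit, hrest0, add_zero, hUdec, ← ENNReal.tsum_mul_left]
    exact ENNReal.tsum_le_tsum hup
  have hB_ge : (ENNReal.ofReal δ⁻¹ * 2⁻¹)
      * (∑' n : ℕ, ENNReal.ofReal (G (n+1) - G n) * 2⁻¹ ^ n)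
        ≤ (∫⁻ η in Ioi c, ENNReal.ofReal (1 / J η)) := by
    rw [hsplit, hrest0, add_zero, hUdec, ← ENNReal.tsum_mul_left]
    exact ENNReal.tsum_le_tsum hlo
  constructor
  · intro hB
    exact aux_top_of_le_mul hB_le hB ENNReal.ofReal_ne_top
  · intro hS
    have h1 : (ENNReal.ofReal δ⁻¹ * 2⁻¹)
        * (∑' n : ℕ, ENNReal.ofReal (G (n+1) - G n) * 2⁻¹ ^ n) = ⊤ := by
      rw [hS, ENNReal.mul_top]
      exact (ENNReal.mul_pos (ENNReal.ofReal_pos.2 (by positivity)).ne'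
        (ENNReal.inv_ne_zero.2 ENNReal.ofNat_ne_top)).ne'
    exact top_le_iff.1 (h1 ▸ hB_ge)

lemma aux_J_le (Φ : ℝ → ℝ) (hΦmono : MonotoneOn Φ (Set.Ici 0))
    (hΦnonneg : ∀ t : ℝ, 0 ≤ t → 0 ≤ Φ t) (p : ℝ) (hp : 0 < p)
    (a η : ℝ) (ha : 0 < a)
    (hwit : Φ (a ^ p) = 0 ∨ Real.log (Φ (a ^ p)) < η) :
    ENNReal.ofReal (1 / sInf {s : ℝ | 0 ≤ s ∧ Φ (s ^ p) ≠ 0 ∧ η ≤ Real.log (Φ (s ^ p))})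
      ≤ ENNReal.ofReal (1 / a) := by
  rcases Set.eq_empty_or_nonempty
    {s : ℝ | 0 ≤ s ∧ Φ (s ^ p) ≠ 0 ∧ η ≤ Real.log (Φ (s ^ p))} with hemp | hne'
  · rw [hemp, Real.sInf_empty]
    simp
  · have hlb : a ≤ sInf {s : ℝ | 0 ≤ s ∧ Φ (s ^ p) ≠ 0 ∧ η ≤ Real.log (Φ (s ^ p))} := by
      refine le_csInf hne' fun s hs => ?_
      by_contra hlt
      push_neg at hlt
      have hmono : Φ (s ^ p) ≤ Φ (a ^ p) :=
        hΦmono (Real.rpow_nonneg hs.1 p) (Real.rpow_nonneg (hs.1.trans hlt.le) p)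
          (Real.rpow_le_rpow hs.1 hlt.le hp.le)
      rcases hwit with h0 | hlog
      · exact hs.2.1 (le_antisymm (hmono.trans_eq h0)
          (hΦnonneg _ (Real.rpow_nonneg hs.1 p)))
      · have hpos : 0 < Φ (s ^ p) :=
          (hΦnonneg _ (Real.rpow_nonneg hs.1 p)).lt_of_ne (Ne.symm hs.2.1)
        have : Real.log (Φ (s ^ p)) ≤ Real.log (Φ (a ^ p)) := Real.log_le_log hpos hmono
        linarith [hs.2.2]
    exact ENNReal.ofReal_le_ofReal (one_div_le_one_div_of_le ha hlb)


/-- Let `Φ : [0,∞] → [0,∞]` be non-decreasing and finite on `[0,∞)`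
(modelled as a non-decreasing non-negative real function on `[0,∞)`), `p ∈ (0,∞)`,
`Φ_p(t) = Φ(t^p)`, `H_p(t) = log Φ_p(t)`, `t₀ = sup{ t : Φ_p(t) = 0 }`, and
`H_p⁻¹(η) = inf{ t : H_p(t) ≥ η }` (the infimum over `t ≥ 0` with `Φ_p(t) > 0` and
`log Φ_p(t) ≥ η`; the value `-∞` of `H_p` at points where `Φ_p = 0` never exceeds a
real `η`). Then `∫_δ^∞ H_p(t) dt/t² = ∞` for some `δ > t₀` iff
`∫_{δ*}^∞ dη/H_p⁻¹(η) = ∞` for some `δ* > H_p(+0)`; the condition `δ* > H_p(+0)`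
(where `H_p(+0) = lim_{t→0⁺} H_p(t) ∈ [-∞,∞)`) is expressed as: there is `t > 0`
with `Φ_p(t) = 0` (so `H_p(t) = -∞ < δ*`) or `log Φ_p(t) < δ*`. -/
theorem stmt_6 (Φ : ℝ → ℝ) (hΦmono : MonotoneOn Φ (Set.Ici 0))
    (hΦnonneg : ∀ t : ℝ, 0 ≤ t → 0 ≤ Φ t)
    (p : ℝ) (hp : 0 < p)
    (Hp : ℝ → ℝ) (hHp : Hp = fun t : ℝ => Real.log (Φ (t ^ p)))
    (t₀ : ℝ) (ht₀ : t₀ = sSup {t : ℝ | 0 ≤ t ∧ Φ (t ^ p) = 0})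
    (HpInv : ℝ → ℝ)
    (hHpInv : HpInv = fun η : ℝ =>
      sInf {t : ℝ | 0 ≤ t ∧ Φ (t ^ p) ≠ 0 ∧ η ≤ Real.log (Φ (t ^ p))}) :
    (∃ δ : ℝ, t₀ < δ ∧ ∫⁻ t in Set.Ioi δ, ENNReal.ofReal (Hp t / t ^ 2) = ∞)
      ↔ ∃ δs : ℝ,
          (∃ t : ℝ, 0 < t ∧ (Φ (t ^ p) = 0 ∨ Real.log (Φ (t ^ p)) < δs)) ∧
          ∫⁻ η in Set.Ioi δs, ENNReal.ofReal (1 / HpInv η) = ∞ := by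
  subst hHp hHpInv ht₀
  simp only []
  by_cases hbdd : BddAbove {t : ℝ | 0 ≤ t ∧ Φ (t ^ p) = 0}
  · -- non-degenerate case
    have ht₀nonneg : 0 ≤ sSup {t : ℝ | 0 ≤ t ∧ Φ (t ^ p) = 0} := by
      rcases Set.eq_empty_or_nonempty {t : ℝ | 0 ≤ t ∧ Φ (t ^ p) = 0} with he | ⟨z, hz⟩
      · rw [he, Real.sSup_empty]
      · exact hz.1.trans (le_csSup hbdd hz)
    have hNE : ∀ t : ℝ, sSup {t : ℝ | 0 ≤ t ∧ Φ (t ^ p) = 0} < t → Φ (t ^ p) ≠ 0 := by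
      intro t ht h0
      have h0' : 0 ≤ t := ht₀nonneg.trans ht.le
      exact absurd (le_csSup hbdd ⟨h0', h0⟩) (not_le.2 ht)
    have hcore : ∀ δ : ℝ, sSup {t : ℝ | 0 ≤ t ∧ Φ (t ^ p) = 0} < δ →
        ((∫⁻ t in Ioi δ, ENNReal.ofReal (Real.log (Φ (t ^ p)) / t ^ 2)) = ⊤ ↔
          (∫⁻ η in Ioi (max (Real.log (Φ (δ ^ p))) 0),
            ENNReal.ofReal
              (1 / sInf {s : ℝ | 0 ≤ s ∧ Φ (s ^ p) ≠ 0 ∧ η ≤ Real.log (Φ (s ^ p))})) = ⊤) := by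
      intro δ hδ
      have hδpos : 0 < δ := ht₀nonneg.trans_lt hδ
      have hne : ∀ t : ℝ, δ ≤ t → Φ (t ^ p) ≠ 0 := fun t ht => hNE t (hδ.trans_le ht)
      have hstrong : ∀ s t : ℝ, 0 ≤ s → s ≤ t → δ ≤ t → Φ (s ^ p) ≠ 0 →
          Real.log (Φ (s ^ p)) ≤ Real.log (Φ (t ^ p)) := by
        intro s t hs hst _ hsne
        have hpos : 0 < Φ (s ^ p) :=
          (hΦnonneg _ (Real.rpow_nonneg hs p)).lt_of_ne (Ne.symm hsne)
        exact Real.log_le_log hpos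
          (hΦmono (Real.rpow_nonneg hs p) (Real.rpow_nonneg (hs.trans hst) p)
            (Real.rpow_le_rpow hs hst hp.le))
      have hHmono : ∀ s t : ℝ, δ ≤ s → s ≤ t →
          Real.log (Φ (s ^ p)) ≤ Real.log (Φ (t ^ p)) :=
        fun s t hs hst => hstrong s t (hδpos.le.trans hs) hst (hs.trans hst) (hne s hs)
      have hTδ : ∀ n : ℕ, δ ≤ δ * 2 ^ n := fun n =>
        le_mul_of_one_le_right hδpos.le (one_le_pow₀ one_le_two)
      have hTmono : Monotone (fun n : ℕ => δ * 2 ^ n) := fun m n h =>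
        mul_le_mul_of_nonneg_left (pow_le_pow_right₀ one_le_two h) hδpos.le
      have h1 := partA (fun t => Real.log (Φ (t ^ p))) δ hδpos hHmono
      have h2 := partC (fun n : ℕ => Real.log (Φ ((δ * 2 ^ n) ^ p)))
        (fun m n h => hHmono _ _ (hTδ m) (hTmono h))
        (max (Real.log (Φ (δ ^ p))) 0) (le_max_right _ _)
        (by
          show Real.log (Φ ((δ * 2 ^ (0:ℕ)) ^ p)) ≤ max (Real.log (Φ (δ ^ p))) 0
          rw [show δ * 2 ^ (0:ℕ) = δ from by norm_num]
          exact le_max_left _ _)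
      have h3 := partB Φ p (fun t => Real.log (Φ (t ^ p)))
        (fun η => sInf {s : ℝ | 0 ≤ s ∧ Φ (s ^ p) ≠ 0 ∧ η ≤ Real.log (Φ (s ^ p))})
        (max (Real.log (Φ (δ ^ p))) 0) δ hδpos hstrong hne rfl (fun η => rfl)
      exact h1.trans (h2.symm.trans h3.symm)
    constructor
    · rintro ⟨δ, hδ, hA⟩
      have hδpos : 0 < δ := ht₀nonneg.trans_lt hδ
      have hBc := (hcore δ hδ).1 hA
      refine ⟨max (Real.log (Φ (δ ^ p))) 0 + 1,
        ⟨δ, hδpos, Or.inr ((le_max_left _ _).trans_lt (lt_add_one _))⟩, ?_⟩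
      rw [aux_split (le_of_lt (lt_add_one (max (Real.log (Φ (δ ^ p))) 0)))
        (fun η => ENNReal.ofReal
          (1 / sInf {s : ℝ | 0 ≤ s ∧ Φ (s ^ p) ≠ 0 ∧ η ≤ Real.log (Φ (s ^ p))}))] at hBc
      rcases ENNReal.add_eq_top.1 hBc with h | h
      · exfalso
        have hfin := aux_upper (f := fun η => ENNReal.ofReal
            (1 / sInf {s : ℝ | 0 ≤ s ∧ Φ (s ^ p) ≠ 0 ∧ η ≤ Real.log (Φ (s ^ p))}))
          (measurableSet_Ioc (a := max (Real.log (Φ (δ ^ p))) 0)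
            (b := max (Real.log (Φ (δ ^ p))) 0 + 1))
          (C := ENNReal.ofReal (1 / δ)) (fun η hη =>
            aux_J_le Φ hΦmono hΦnonneg p hp δ η hδpos
              (Or.inr ((le_max_left _ _).trans_lt hη.1)))
        rw [h] at hfin
        exact (ENNReal.mul_ne_top ENNReal.ofReal_ne_top
          (by rw [Real.volume_Ioc]; exact ENNReal.ofReal_ne_top)) (top_le_iff.1 hfin)
      · exact h
    · rintro ⟨δs, ⟨t₁, ht₁, hwit⟩, hB⟩
      set δ : ℝ := max t₁ (sSup {t : ℝ | 0 ≤ t ∧ Φ (t ^ p) = 0}) + 1 with hδdef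
      have hδ : sSup {t : ℝ | 0 ≤ t ∧ Φ (t ^ p) = 0} < δ :=
        (le_max_right _ _).trans_lt (lt_add_one _)
      have hBc : (∫⁻ η in Ioi (max (Real.log (Φ (δ ^ p))) 0),
          ENNReal.ofReal
            (1 / sInf {s : ℝ | 0 ≤ s ∧ Φ (s ^ p) ≠ 0 ∧ η ≤ Real.log (Φ (s ^ p))})) = ⊤ := by
        rcases le_or_gt δs (max (Real.log (Φ (δ ^ p))) 0) with hle | hlt
        · rw [aux_split hle (fun η => ENNReal.ofReal
            (1 / sInf {s : ℝ | 0 ≤ s ∧ Φ (s ^ p) ≠ 0 ∧ η ≤ Real.log (Φ (s ^ p))}))] at hB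
          rcases ENNReal.add_eq_top.1 hB with h | h
          · exfalso
            have hfin := aux_upper (f := fun η => ENNReal.ofReal
                (1 / sInf {s : ℝ | 0 ≤ s ∧ Φ (s ^ p) ≠ 0 ∧ η ≤ Real.log (Φ (s ^ p))}))
              (measurableSet_Ioc (a := δs) (b := max (Real.log (Φ (δ ^ p))) 0))
              (C := ENNReal.ofReal (1 / t₁)) (fun η hη =>
                aux_J_le Φ hΦmono hΦnonneg p hp t₁ η ht₁
                  (hwit.imp id fun hlog => hlog.trans hη.1))
            rw [h] at hfin
            exact (ENNReal.mul_ne_top ENNReal.ofReal_ne_top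
              (by rw [Real.volume_Ioc]; exact ENNReal.ofReal_ne_top)) (top_le_iff.1 hfin)
          · exact h
        · refine top_le_iff.1 (hB ▸ lintegral_mono' ?_ le_rfl)
          exact Measure.restrict_mono (Set.Ioi_subset_Ioi hlt.le) le_rfl
      exact ⟨δ, hδ, (hcore δ hδ).2 hBc⟩
  · -- degenerate case : Φ vanishes on [0,∞)
    have hzero : ∀ t : ℝ, 0 ≤ t → Φ (t ^ p) = 0 := by
      intro t ht
      obtain ⟨z, hz, hzt⟩ := not_bddAbove_iff.1 hbdd t
      have h1 : Φ (t ^ p) ≤ Φ (z ^ p) :=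
        hΦmono (Real.rpow_nonneg ht p) (Real.rpow_nonneg hz.1 p)
          (Real.rpow_le_rpow ht hzt.le hp.le)
      exact le_antisymm (h1.trans_eq hz.2) (hΦnonneg _ (Real.rpow_nonneg ht p))
    constructor
    · rintro ⟨δ, hδ, hint⟩
      exfalso
      rw [Real.sSup_of_not_bddAbove hbdd] at hδ
      have hle : (∫⁻ t in Ioi δ, ENNReal.ofReal (Real.log (Φ (t ^ p)) / t ^ 2))
          ≤ 0 * volume (Ioi δ) := by
        refine aux_upper measurableSet_Ioi fun t ht => ?_
        rw [hzero t (hδ.le.trans (le_of_lt ht)), Real.log_zero, zero_div]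
        simp
      rw [hint] at hle
      simp at hle
    · rintro ⟨δs, hw, hint⟩
      exfalso
      have hle : (∫⁻ η in Ioi δs, ENNReal.ofReal
          (1 / sInf {s : ℝ | 0 ≤ s ∧ Φ (s ^ p) ≠ 0 ∧ η ≤ Real.log (Φ (s ^ p))}))
          ≤ 0 * volume (Ioi δs) := by
        refine aux_upper measurableSet_Ioi fun η hη => ?_
        have hempty : {s : ℝ | 0 ≤ s ∧ Φ (s ^ p) ≠ 0 ∧ η ≤ Real.log (Φ (s ^ p))} = ∅ := by
          rw [Set.eq_empty_iff_forall_notMem]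
          rintro s ⟨h0, hne, _⟩
          exact hne (hzero s h0)
        rw [hempty, Real.sInf_empty]
        simp
      rw [hint] at hle
      simp at hle
end

section
/- Let n ≥ 2 and let K : (0,1] → [1,∞) be a continuous function with I(1) < ∞, where I(t) = ∫₀^{t} dr/(r·K(r)). Define f : 𝔹ⁿ \ {0} → ℝⁿ by f(x) = (x/|x|)·exp(I(|x|)). Then f is a C¹ homeomorphism of the punctured unit ball 𝔹ⁿ \ {0} onto the spherical ring { y ∈ ℝⁿ : 1 < |y| < e^{I(1)} } which is differentiable with nonvanishing Jacobian at every point, and its outer dilatation satisfies K_O(x,f) = K(|x|) for every x ∈ 𝔹ⁿ \ {0}. -/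
open MeasureTheory Metric Set Filter
open scoped Topology RealInnerProductSpace

/-- `I(t) = ∫₀ᵗ dr/(r K(r))`. -/
noncomputable def Ifun (K : ℝ → ℝ) (t : ℝ) : ℝ :=
  ∫ r in Set.Ioo (0 : ℝ) t, 1 / (r * K r)

/-- The radial map `f(x) = (x/|x|)·exp(I(|x|))` on the punctured unit ball. -/
noncomputable def radMap (n : ℕ) (K : ℝ → ℝ) (x : EuclideanSpace ℝ (Fin n)) :
    EuclideanSpace ℝ (Fin n) :=
  (Real.exp (Ifun K ‖x‖) * ‖x‖⁻¹) • x

section oneD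
variable {K : ℝ → ℝ} (hKcont : ContinuousOn K (Set.Ioc 0 1))
    (hKge : ∀ r ∈ Set.Ioc (0 : ℝ) 1, 1 ≤ K r)
    (hKint : IntegrableOn (fun r : ℝ => 1 / (r * K r)) (Set.Ioo (0 : ℝ) 1))

lemma Ifun_eq_interval {t : ℝ} (ht : 0 ≤ t) :
    Ifun K t = ∫ r in (0:ℝ)..t, 1 / (r * K r) := by
  rw [intervalIntegral.integral_of_le ht, integral_Ioc_eq_integral_Ioo, Ifun]

include hKint in
lemma intInt {s t : ℝ} (hs : 0 ≤ s) (h : s ≤ t) (ht : t ≤ 1) :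
    IntervalIntegrable (fun r : ℝ => 1 / (r * K r)) volume s t := by
  rw [intervalIntegrable_iff_integrableOn_Ioc_of_le h,
    integrableOn_Ioc_iff_integrableOn_Ioo]
  exact hKint.mono_set (fun r hr => ⟨lt_of_le_of_lt hs hr.1, lt_of_lt_of_le hr.2 ht⟩)

include hKcont hKge in
lemma Kcont_at {t : ℝ} (ht : t ∈ Set.Ioo (0:ℝ) 1) :
    ContinuousAt (fun r : ℝ => 1 / (r * K r)) t := by
  have hK : ContinuousAt K t :=
    (hKcont.mono Ioo_subset_Ioc_self).continuousAt (Ioo_mem_nhds ht.1 ht.2)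
  have h1 : (1:ℝ) ≤ K t := hKge t ⟨ht.1, ht.2.le⟩
  have hne : t * K t ≠ 0 := by nlinarith [ht.1]
  exact continuousAt_const.div (continuousAt_id.mul hK) hne

include hKcont hKge hKint in
lemma Ifun_hasDerivAt {t : ℝ} (ht : t ∈ Set.Ioo (0:ℝ) 1) :
    HasDerivAt (Ifun K) (1 / (t * K t)) t := by
  have hF : HasDerivAt (fun u => ∫ r in (0:ℝ)..u, 1 / (r * K r)) (1 / (t * K t)) t := by
    refine intervalIntegral.integral_hasDerivAt_right (intInt hKint le_rfl ht.1.le ht.2.le)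
      ?_ (Kcont_at hKcont hKge ht)
    exact ContinuousAt.stronglyMeasurableAtFilter isOpen_Ioo
      (fun u hu => Kcont_at hKcont hKge hu) t ht
  refine hF.congr_of_eventuallyEq ?_
  filter_upwards [Ioo_mem_nhds ht.1 ht.2] with u hu
  exact Ifun_eq_interval hu.1.le

include hKint in
lemma Ifun_continuousOn : ContinuousOn (Ifun K) (Set.Icc 0 1) := by
  have : ∀ u ∈ Set.Icc (0:ℝ) 1, Ifun K u = ∫ r in Ioc (0:ℝ) u, 1 / (r * K r) := fun u _ =>
    (integral_Ioc_eq_integral_Ioo).symm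
  rw [continuousOn_congr this]
  apply intervalIntegral.continuousOn_primitive
  rw [integrableOn_Icc_iff_integrableOn_Ioo]
  exact hKint

include hKge hKint in
lemma Ifun_strictMonoOn : StrictMonoOn (Ifun K) (Set.Icc 0 1) := by
  intro s hs t ht hst
  rw [Ifun_eq_interval hs.1, Ifun_eq_interval (hs.1.trans hst.le)]
  have hsub : (∫ r in (0:ℝ)..t, 1 / (r * K r)) - (∫ r in (0:ℝ)..s, 1 / (r * K r))
      = ∫ r in s..t, 1 / (r * K r) := by
    rw [intervalIntegral.integral_interval_sub_left (intInt hKint le_rfl (hs.1.trans hst.le) ht.2)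
      (intInt hKint le_rfl hs.1 hs.2)]
  have hpos : 0 < ∫ r in s..t, 1 / (r * K r) := by
    apply intervalIntegral.intervalIntegral_pos_of_pos_on
      (intInt hKint hs.1 hst.le ht.2) _ hst
    intro x hx
    have h1 : (1:ℝ) ≤ K x := hKge x ⟨hs.1.trans_lt hx.1, hx.2.le.trans ht.2⟩
    have hx0 : 0 < x := hs.1.trans_lt hx.1
    positivity
  linarith

lemma Ifun_zero : Ifun K 0 = 0 := by simp [Ifun]

include hKcont hKge hKint in
lemma Ifun_contDiffOn : ContDiffOn ℝ 1 (Ifun K) (Set.Ioo 0 1) := by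
  have h1 : (1 : WithTop ℕ∞) = 0 + 1 := by norm_num
  rw [h1, contDiffOn_succ_iff_deriv_of_isOpen isOpen_Ioo]
  refine ⟨fun t ht => (Ifun_hasDerivAt hKcont hKge hKint ht).differentiableAt.differentiableWithinAt,
    by simp, ?_⟩
  have : ∀ t ∈ Set.Ioo (0:ℝ) 1, deriv (Ifun K) t = 1 / (t * K t) := fun t ht =>
    (Ifun_hasDerivAt hKcont hKge hKint ht).deriv
  rw [contDiffOn_zero, continuousOn_congr this]
  exact continuousOn_of_forall_continuousAt (fun t ht => Kcont_at hKcont hKge ht)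

end oneD

section linalg
variable {E : Type*} [NormedAddCommGroup E] [InnerProductSpace ℝ E]

/-- The linear map `h ↦ a h + ((b-a)/‖x‖²) ⟪x,h⟫ x`. -/
noncomputable def Dmap (a b : ℝ) (x : E) : E →L[ℝ] E :=
  a • ContinuousLinearMap.id ℝ E + ((b - a) / ‖x‖ ^ 2) • ((innerSL ℝ x).smulRight x)

lemma Dmap_apply (a b : ℝ) (x h : E) :
    Dmap a b x h = a • h + (((b - a) / ‖x‖ ^ 2) * ⟪x, h⟫) • x := by
  simp [Dmap, ContinuousLinearMap.smul_apply, ContinuousLinearMap.smulRight_apply, smul_smul]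

lemma Dmap_apply_orth (a b : ℝ) {x h : E} (hor : ⟪x, h⟫ = 0) :
    Dmap a b x h = a • h := by
  simp [Dmap_apply, hor]

lemma Dmap_apply_self (a b : ℝ) {x : E} (hx : x ≠ 0) :
    Dmap a b x x = b • x := by
  rw [Dmap_apply, real_inner_self_eq_norm_sq]
  have hx' : ‖x‖ ≠ 0 := norm_ne_zero_iff.2 hx
  rw [div_mul_cancel₀ _ (by positivity)]
  rw [← add_smul]
  ring_nf

lemma Dmap_norm_sq (a b : ℝ) {x : E} (hx : x ≠ 0) (h : E) :
    ‖Dmap a b x h‖ ^ 2 = a ^ 2 * ‖h‖ ^ 2 + (b ^ 2 - a ^ 2) * (⟪x, h⟫ / ‖x‖) ^ 2 := by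
  have hx' : (0:ℝ) < ‖x‖ := norm_pos_iff.2 hx
  rw [Dmap_apply, ← real_inner_self_eq_norm_sq]
  have expand : ⟪a • h + (((b - a) / ‖x‖ ^ 2) * ⟪x, h⟫) • x,
      a • h + (((b - a) / ‖x‖ ^ 2) * ⟪x, h⟫) • x⟫
      = a^2 * ⟪h,h⟫ + 2*a*(((b - a) / ‖x‖ ^ 2) * ⟪x, h⟫) * ⟪x,h⟫
        + (((b - a) / ‖x‖ ^ 2) * ⟪x, h⟫)^2 * ⟪x,x⟫ := by
    simp only [inner_add_add_self, real_inner_smul_left, real_inner_smul_right]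
    rw [real_inner_comm h x]
    ring
  rw [expand, real_inner_self_eq_norm_sq, real_inner_self_eq_norm_sq]
  field_simp
  ring

lemma Dmap_le (a b : ℝ) {x : E} (hb : 0 ≤ b) (hba : b ≤ a) (hx : x ≠ 0) (h : E) :
    ‖Dmap a b x h‖ ≤ a * ‖h‖ := by
  have hx' : (0:ℝ) < ‖x‖ := norm_pos_iff.2 hx
  have hsq := Dmap_norm_sq a b hx h
  have hcs : (⟪x, h⟫ / ‖x‖) ^ 2 ≤ ‖h‖ ^ 2 := by
    rw [div_pow, div_le_iff₀ (by positivity)]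
    have := abs_real_inner_le_norm x h
    nlinarith [abs_nonneg ⟪x,h⟫, sq_abs ⟪x,h⟫]
  have hab2 : (0:ℝ) ≤ a^2 - b^2 := by nlinarith
  have h1 : ‖Dmap a b x h‖ ^ 2 ≤ (a * ‖h‖) ^ 2 := by
    nlinarith [mul_nonneg hab2 (sq_nonneg (⟪x,h⟫ / ‖x‖))]
  nlinarith [norm_nonneg (Dmap a b x h), norm_nonneg h, hb.trans hba, norm_nonneg h,
    mul_nonneg (hb.trans hba) (norm_nonneg h)]

lemma Dmap_ge (a b : ℝ) {x : E} (hb : 0 ≤ b) (hba : b ≤ a) (hx : x ≠ 0) (h : E) :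
    b * ‖h‖ ≤ ‖Dmap a b x h‖ := by
  have hx' : (0:ℝ) < ‖x‖ := norm_pos_iff.2 hx
  have hsq := Dmap_norm_sq a b hx h
  have hcs : (⟪x, h⟫ / ‖x‖) ^ 2 ≤ ‖h‖ ^ 2 := by
    rw [div_pow, div_le_iff₀ (by positivity)]
    have := abs_real_inner_le_norm x h
    nlinarith [abs_nonneg ⟪x,h⟫, sq_abs ⟪x,h⟫]
  have hab2 : (0:ℝ) ≤ a^2 - b^2 := by nlinarith
  have h1 : (b * ‖h‖) ^ 2 ≤ ‖Dmap a b x h‖ ^ 2 := by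
    nlinarith [mul_nonneg hab2 (sub_nonneg.mpr hcs)]
  nlinarith [norm_nonneg (Dmap a b x h), mul_nonneg hb (norm_nonneg h)]

lemma Dmap_injective (a b : ℝ) {x : E} (hb : 0 < b) (hba : b ≤ a) (hx : x ≠ 0) :
    Function.Injective (Dmap a b x) := by
  intro h₁ h₂ he
  have hge := Dmap_ge a b hb.le hba hx (h₁ - h₂)
  rw [map_sub, he, sub_self, norm_zero] at hge
  have h0 : ‖h₁ - h₂‖ = 0 := by nlinarith [norm_nonneg (h₁ - h₂)]
  exact sub_eq_zero.mp (norm_eq_zero.mp h0)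

variable [FiniteDimensional ℝ E] {n : ℕ}

lemma exists_onb (hn : Module.finrank ℝ E = n) [NeZero n] {x : E} (hx : x ≠ 0) :
    ∃ bb : OrthonormalBasis (Fin n) ℝ E, bb 0 = ‖x‖⁻¹ • x := by
  have hux : ‖(‖x‖⁻¹ • x)‖ = 1 := by
    rw [norm_smul, norm_inv, norm_norm, inv_mul_cancel₀ (norm_ne_zero_iff.2 hx)]
  have horth : Orthonormal ℝ (Set.restrict {(0 : Fin n)} (fun _ => ‖x‖⁻¹ • x : Fin n → E)) := by
    constructor
    · intro i; exact hux
    · intro i j hij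
      exact absurd (Subtype.ext ((Set.mem_singleton_iff.mp i.2).trans
        (Set.mem_singleton_iff.mp j.2).symm)) hij
  obtain ⟨bb, hbb⟩ := horth.exists_orthonormalBasis_extension_of_card_eq
    (by simp [hn])
  exact ⟨bb, hbb 0 rfl⟩

lemma Dmap_opNorm (a b : ℝ) (hb : 0 ≤ b) (hba : b ≤ a) (hn : Module.finrank ℝ E = n)
    (hn2 : 2 ≤ n) {x : E} (hx : x ≠ 0) : ‖Dmap a b x‖ = a := by
  have : NeZero n := ⟨by omega⟩
  obtain ⟨bb, hbb⟩ := exists_onb hn hx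
  set j : Fin n := ⟨1, by omega⟩ with hjdef
  have h01 : (0 : Fin n) ≠ j := by simp [hjdef, Fin.ext_iff]
  have horth : ⟪x, bb j⟫ = 0 := by
    have h : ⟪bb 0, bb j⟫ = 0 := bb.orthonormal.2 h01
    rw [hbb, real_inner_smul_left] at h
    have hx' : ‖x‖ ≠ 0 := norm_ne_zero_iff.2 hx
    rcases mul_eq_zero.mp h with h | h
    · exact absurd h (by positivity)
    · exact h
  apply le_antisymm
  · exact (Dmap a b x).opNorm_le_bound (hb.trans hba) (Dmap_le a b hb hba hx)
  · have h1 : Dmap a b x (bb j) = a • bb j := Dmap_apply_orth a b horth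
    have := (Dmap a b x).unit_le_opNorm (bb j) (le_of_eq (bb.orthonormal.1 j))
    rw [h1, norm_smul, bb.orthonormal.1 j, mul_one, Real.norm_eq_abs] at this
    calc a ≤ |a| := le_abs_self a
    _ ≤ ‖Dmap a b x‖ := this

lemma Dmap_det (a b : ℝ) (hn : Module.finrank ℝ E = n) [NeZero n] {x : E} (hx : x ≠ 0) :
    (Dmap a b x).det = b * a ^ (n - 1) := by
  obtain ⟨bb, hbb⟩ := exists_onb hn hx
  have hx' : ‖x‖ ≠ 0 := norm_ne_zero_iff.2 hx
  have hM : LinearMap.toMatrix bb.toBasis bb.toBasis (Dmap a b x : E →ₗ[ℝ] E)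
      = Matrix.diagonal (fun i : Fin n => if i = 0 then b else a) := by
    ext i j
    rw [LinearMap.toMatrix_apply]
    simp only [OrthonormalBasis.coe_toBasis, OrthonormalBasis.coe_toBasis_repr_apply,
      OrthonormalBasis.repr_apply_apply, ContinuousLinearMap.coe_coe]
    by_cases hj : j = 0
    · subst hj
      rw [hbb, (Dmap a b x).map_smul, Dmap_apply_self a b hx, smul_comm, ← hbb]
      rw [real_inner_smul_right, orthonormal_iff_ite.mp bb.orthonormal]
      by_cases hi : i = 0 <;> simp [hi, Matrix.diagonal]
    · have horj : ⟪x, bb j⟫ = 0 := by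
        have h : ⟪bb 0, bb j⟫ = 0 := bb.orthonormal.2 (Ne.symm hj)
        rw [hbb, real_inner_smul_left] at h
        rcases mul_eq_zero.mp h with h | h
        · exact absurd h (by positivity)
        · exact h
      rw [Dmap_apply_orth a b horj, real_inner_smul_right,
        orthonormal_iff_ite.mp bb.orthonormal]
      by_cases hij : i = j <;> simp [hij, Matrix.diagonal, hj, hij]
  have hdet : (Dmap a b x).det = LinearMap.det (Dmap a b x : E →ₗ[ℝ] E) := rfl
  rw [hdet, ← LinearMap.det_toMatrix bb.toBasis, hM, Matrix.det_diagonal]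
  rw [← Finset.mul_prod_erase Finset.univ _ (Finset.mem_univ (0 : Fin n))]
  simp only [if_pos rfl]
  congr 1
  rw [Finset.prod_congr rfl (fun i hi => if_neg (Finset.ne_of_mem_erase hi))]
  rw [Finset.prod_const, Finset.card_erase_of_mem (Finset.mem_univ _), Finset.card_univ,
    Fintype.card_fin]

omit [FiniteDimensional ℝ E] in
lemma hasFDerivAt_norm' {x : E} (hx : x ≠ 0) :
    HasFDerivAt (fun y : E => ‖y‖) (‖x‖⁻¹ • innerSL ℝ x) x := by
  have hx' : (0:ℝ) < ‖x‖ := norm_pos_iff.2 hx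
  have h1 : HasFDerivAt (fun y : E => ‖y‖ ^ 2) ((2:ℕ) • innerSL ℝ x) x :=
    (hasStrictFDerivAt_norm_sq x).hasFDerivAt
  have h2 := h1.sqrt (by positivity : ‖x‖ ^ 2 ≠ 0)
  have he : (fun y : E => Real.sqrt (‖y‖ ^ 2)) = fun y : E => ‖y‖ :=
    funext fun y => Real.sqrt_sq (norm_nonneg y)
  rw [he] at h2
  convert h2 using 1
  ext h
  rw [Real.sqrt_sq (norm_nonneg x)]
  simp only [ContinuousLinearMap.smul_apply, smul_eq_mul, nsmul_eq_mul, Nat.cast_ofNat]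
  field_simp

end linalg

lemma continuousOn_invFunOn {α β : Type*} [TopologicalSpace α] [TopologicalSpace β] [Nonempty α]
    {f : α → β} {s : Set α} (hinj : Set.InjOn f s) (hs : IsOpen s)
    (hmap : ∀ x ∈ s, Filter.map f (𝓝 x) = 𝓝 (f x)) :
    ContinuousOn (Function.invFunOn f s) (f '' s) := by
  rw [_root_.continuousOn_iff]
  rintro y ⟨x, hxs, rfl⟩ t ht hgt
  have hgx : Function.invFunOn f s (f x) = x := hinj.leftInvOn_invFunOn hxs
  rw [hgx] at hgt
  refine ⟨f '' (t ∩ s), ?_, ⟨x, ⟨hgt, hxs⟩, rfl⟩, ?_⟩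
  · rw [isOpen_iff_mem_nhds]
    rintro z ⟨w, hw, rfl⟩
    rw [← hmap w hw.2, mem_map]
    exact mem_of_superset ((ht.inter hs).mem_nhds hw) (Set.subset_preimage_image f _)
  · rintro z ⟨⟨w, hw, rfl⟩, -⟩
    rw [Set.mem_preimage, hinj.leftInvOn_invFunOn hw.2]
    exact hw.1

/-- Let `n ≥ 2` and `K : (0,1] → [1,∞)` continuous with
`I(1) < ∞` (i.e. `r ↦ 1/(r K(r))` integrable on `(0,1)`), `I(t) = ∫₀ᵗ dr/(r K(r))`.
Then `f(x) = (x/|x|) e^{I(|x|)}` is a `C¹` homeomorphism of `𝔹ⁿ \ {0}` onto the ring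
`{1 < |y| < e^{I(1)}}`, differentiable with non-vanishing Jacobian everywhere, and
its outer dilatation satisfies `K_O(x,f) = ‖f′(x)‖ⁿ/|det f′(x)| = K(|x|)`. -/
theorem stmt_16 (n : ℕ) (hn : 2 ≤ n)
    (K : ℝ → ℝ) (hKcont : ContinuousOn K (Set.Ioc 0 1))
    (hKge : ∀ r ∈ Set.Ioc (0 : ℝ) 1, 1 ≤ K r)
    (hKint : IntegrableOn (fun r : ℝ => 1 / (r * K r)) (Set.Ioo (0 : ℝ) 1)) :
    Set.InjOn (radMap n K) (Metric.ball (0 : EuclideanSpace ℝ (Fin n)) 1 \ {0}) ∧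
    radMap n K '' (Metric.ball (0 : EuclideanSpace ℝ (Fin n)) 1 \ {0}) =
      {y : EuclideanSpace ℝ (Fin n) | 1 < ‖y‖ ∧ ‖y‖ < Real.exp (Ifun K 1)} ∧
    ContDiffOn ℝ 1 (radMap n K) (Metric.ball (0 : EuclideanSpace ℝ (Fin n)) 1 \ {0}) ∧
    ContinuousOn
      (Function.invFunOn (radMap n K) (Metric.ball (0 : EuclideanSpace ℝ (Fin n)) 1 \ {0}))
      {y : EuclideanSpace ℝ (Fin n) | 1 < ‖y‖ ∧ ‖y‖ < Real.exp (Ifun K 1)} ∧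
    ∀ x ∈ Metric.ball (0 : EuclideanSpace ℝ (Fin n)) 1 \ {0},
      DifferentiableAt ℝ (radMap n K) x ∧
      (fderiv ℝ (radMap n K) x).det ≠ 0 ∧
      ‖fderiv ℝ (radMap n K) x‖ ^ n / |(fderiv ℝ (radMap n K) x).det| = K ‖x‖ := by
  classical
  have hrank : Module.finrank ℝ (EuclideanSpace ℝ (Fin n)) = n := finrank_euclideanSpace_fin
  have hNZ : NeZero n := ⟨by omega⟩
  set s := Metric.ball (0 : EuclideanSpace ℝ (Fin n)) 1 \ {0} with hsdef
  have hmem : ∀ x : EuclideanSpace ℝ (Fin n), x ∈ s ↔ ‖x‖ < 1 ∧ x ≠ 0 := by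
    intro x
    simp [hsdef, mem_ball_zero_iff]
  have hsopen : IsOpen s := isOpen_ball.sdiff isClosed_singleton
  -- norm of the image point
  have hnormmap : ∀ x : EuclideanSpace ℝ (Fin n), x ≠ 0 →
      ‖radMap n K x‖ = Real.exp (Ifun K ‖x‖) := by
    intro x hx0
    have hr : (0:ℝ) < ‖x‖ := norm_pos_iff.2 hx0
    have he : (0:ℝ) < Real.exp (Ifun K ‖x‖) := Real.exp_pos _
    rw [radMap, norm_smul, Real.norm_eq_abs, abs_of_pos (by positivity), mul_assoc,
      inv_mul_cancel₀ hr.ne', mul_one]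
  -- positivity of Ifun on (0,1]
  have hIpos : ∀ t : ℝ, 0 < t → t ≤ 1 → 0 < Ifun K t := by
    intro t ht ht1
    have := Ifun_strictMonoOn hKge hKint (Set.mem_Icc.2 ⟨le_rfl, zero_le_one⟩)
      (Set.mem_Icc.2 ⟨ht.le, ht1⟩) ht
    rwa [Ifun_zero] at this
  -- the derivative
  have hD : ∀ x : EuclideanSpace ℝ (Fin n), x ∈ s →
      HasFDerivAt (radMap n K)
        (Dmap (Real.exp (Ifun K ‖x‖) * ‖x‖⁻¹)
          (Real.exp (Ifun K ‖x‖) / (‖x‖ * K ‖x‖)) x) x := by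
    intro x hx
    obtain ⟨hx1, hx0⟩ := (hmem x).1 hx
    have hr : (0:ℝ) < ‖x‖ := norm_pos_iff.2 hx0
    have hK1 : (1:ℝ) ≤ K ‖x‖ := hKge _ ⟨hr, hx1.le⟩
    have hKpos : (0:ℝ) < K ‖x‖ := lt_of_lt_of_le one_pos hK1
    have hN : HasFDerivAt (fun y : EuclideanSpace ℝ (Fin n) => ‖y‖)
        (‖x‖⁻¹ • innerSL ℝ x) x := hasFDerivAt_norm' hx0
    have hI := Ifun_hasDerivAt hKcont hKge hKint (Set.mem_Ioo.2 ⟨hr, hx1⟩)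
    have hexp : HasDerivAt (fun t => Real.exp (Ifun K t))
        (Real.exp (Ifun K ‖x‖) * (1 / (‖x‖ * K ‖x‖))) ‖x‖ := hI.exp
    have hinv : HasDerivAt (fun t : ℝ => t⁻¹) (-(‖x‖^2)⁻¹) ‖x‖ := hasDerivAt_inv hr.ne'
    have hphi : HasDerivAt (fun t => Real.exp (Ifun K t) * t⁻¹)
        (Real.exp (Ifun K ‖x‖) * (1 / (‖x‖ * K ‖x‖)) * ‖x‖⁻¹
          + Real.exp (Ifun K ‖x‖) * -(‖x‖^2)⁻¹) ‖x‖ := hexp.mul hinv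
    have hc : HasFDerivAt (fun y : EuclideanSpace ℝ (Fin n) => Real.exp (Ifun K ‖y‖) * ‖y‖⁻¹)
        ((Real.exp (Ifun K ‖x‖) * (1 / (‖x‖ * K ‖x‖)) * ‖x‖⁻¹
          + Real.exp (Ifun K ‖x‖) * -(‖x‖^2)⁻¹) • (‖x‖⁻¹ • innerSL ℝ x)) x :=
      hphi.comp_hasFDerivAt x hN
    have hsm := hc.smul (hasFDerivAt_id x)
    have hCLM : Dmap (Real.exp (Ifun K ‖x‖) * ‖x‖⁻¹)
        (Real.exp (Ifun K ‖x‖) / (‖x‖ * K ‖x‖)) x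
        = (Real.exp (Ifun K ‖x‖) * ‖x‖⁻¹) • ContinuousLinearMap.id ℝ (EuclideanSpace ℝ (Fin n))
          + ((Real.exp (Ifun K ‖x‖) * (1 / (‖x‖ * K ‖x‖)) * ‖x‖⁻¹
          + Real.exp (Ifun K ‖x‖) * -(‖x‖^2)⁻¹) • (‖x‖⁻¹ • innerSL ℝ x)).smulRight x := by
      refine ContinuousLinearMap.ext fun h => ?_
      rw [Dmap_apply]
      simp only [ContinuousLinearMap.add_apply, ContinuousLinearMap.smul_apply,
        ContinuousLinearMap.coe_id', id_eq, ContinuousLinearMap.smulRight_apply,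
        innerSL_apply_apply, smul_eq_mul]
      congr 1
      rw [real_inner_comm] -- keep inner as atom
      rw [real_inner_comm]
      congr 1
      field_simp
      ring
    rw [hCLM]
    exact hsm
  -- smoothness at a point
  have hCD : ∀ x : EuclideanSpace ℝ (Fin n), x ∈ s → ContDiffAt ℝ 1 (radMap n K) x := by
    intro x hx
    obtain ⟨hx1, hx0⟩ := (hmem x).1 hx
    have hr : (0:ℝ) < ‖x‖ := norm_pos_iff.2 hx0
    have h1 : ContDiffAt ℝ 1 (fun y : EuclideanSpace ℝ (Fin n) => ‖y‖) x :=
      contDiffAt_norm ℝ hx0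
    have h2 : ContDiffAt ℝ 1 (Ifun K) ‖x‖ :=
      (Ifun_contDiffOn hKcont hKge hKint).contDiffAt (Ioo_mem_nhds hr hx1)
    have h3 : ContDiffAt ℝ 1 (fun y : EuclideanSpace ℝ (Fin n) => Real.exp (Ifun K ‖y‖)) x :=
      Real.contDiff_exp.contDiffAt.comp x (h2.comp x h1)
    have h4 : ContDiffAt ℝ 1 (fun y : EuclideanSpace ℝ (Fin n) => ‖y‖⁻¹) x :=
      h1.inv hr.ne'
    exact (h3.mul h4).smul contDiffAt_id
  -- quantities a, b and their relations
  have habs : ∀ x : EuclideanSpace ℝ (Fin n), x ∈ s →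
      0 < Real.exp (Ifun K ‖x‖) / (‖x‖ * K ‖x‖) ∧
      Real.exp (Ifun K ‖x‖) / (‖x‖ * K ‖x‖) ≤ Real.exp (Ifun K ‖x‖) * ‖x‖⁻¹ := by
    intro x hx
    obtain ⟨hx1, hx0⟩ := (hmem x).1 hx
    have hr : (0:ℝ) < ‖x‖ := norm_pos_iff.2 hx0
    have hK1 : (1:ℝ) ≤ K ‖x‖ := hKge _ ⟨hr, hx1.le⟩
    have hKpos : (0:ℝ) < K ‖x‖ := lt_of_lt_of_le one_pos hK1
    have he : (0:ℝ) < Real.exp (Ifun K ‖x‖) := Real.exp_pos _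
    constructor
    · positivity
    · have h2 : Real.exp (Ifun K ‖x‖) * ‖x‖⁻¹ = Real.exp (Ifun K ‖x‖) / ‖x‖ := by
        rw [div_eq_mul_inv]
      rw [h2]
      gcongr
      nlinarith
  -- injectivity
  have hinj : Set.InjOn (radMap n K) s := by
    intro x hx y hy he
    obtain ⟨hx1, hx0⟩ := (hmem x).1 hx
    obtain ⟨hy1, hy0⟩ := (hmem y).1 hy
    have hrx : (0:ℝ) < ‖x‖ := norm_pos_iff.2 hx0
    have hry : (0:ℝ) < ‖y‖ := norm_pos_iff.2 hy0
    have hexp : Real.exp (Ifun K ‖x‖) = Real.exp (Ifun K ‖y‖) := by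
      rw [← hnormmap x hx0, ← hnormmap y hy0, he]
    have hIeq : Ifun K ‖x‖ = Ifun K ‖y‖ := Real.exp_eq_exp.mp hexp
    have hreq : ‖x‖ = ‖y‖ :=
      (Ifun_strictMonoOn hKge hKint).injOn (Set.mem_Icc.2 ⟨hrx.le, hx1.le⟩)
        (Set.mem_Icc.2 ⟨hry.le, hy1.le⟩) hIeq
    simp only [radMap] at he
    rw [← hreq] at he
    have hcne : Real.exp (Ifun K ‖x‖) * ‖x‖⁻¹ ≠ 0 := by positivity
    exact smul_right_injective (EuclideanSpace ℝ (Fin n)) hcne he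
  -- image
  have himage : radMap n K '' s =
      {y : EuclideanSpace ℝ (Fin n) | 1 < ‖y‖ ∧ ‖y‖ < Real.exp (Ifun K 1)} := by
    ext y
    constructor
    · rintro ⟨x, hx, rfl⟩
      obtain ⟨hx1, hx0⟩ := (hmem x).1 hx
      have hrx : (0:ℝ) < ‖x‖ := norm_pos_iff.2 hx0
      rw [Set.mem_setOf_eq, hnormmap x hx0]
      constructor
      · calc (1:ℝ) = Real.exp 0 := Real.exp_zero.symm
        _ < Real.exp (Ifun K ‖x‖) := Real.exp_lt_exp.mpr (hIpos _ hrx hx1.le)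
      · exact Real.exp_lt_exp.mpr (Ifun_strictMonoOn hKge hKint
          (Set.mem_Icc.2 ⟨hrx.le, hx1.le⟩) (Set.mem_Icc.2 ⟨zero_le_one, le_rfl⟩) hx1)
    · rintro ⟨hy1, hy2⟩
      have hy0 : (0:ℝ) < ‖y‖ := lt_trans one_pos hy1
      have hyne : y ≠ 0 := norm_pos_iff.mp hy0
      have hlog : 0 < Real.log ‖y‖ := Real.log_pos hy1
      have hlog2 : Real.log ‖y‖ < Ifun K 1 := (Real.log_lt_iff_lt_exp hy0).mpr hy2
      have hIVT := intermediate_value_Icc (zero_le_one) (Ifun_continuousOn hKint)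
      have hmemI : Real.log ‖y‖ ∈ Set.Icc (Ifun K 0) (Ifun K 1) := by
        rw [Ifun_zero]
        exact ⟨hlog.le, hlog2.le⟩
      obtain ⟨t, htIcc, htval⟩ := hIVT hmemI
      have ht0 : 0 < t := by
        rcases lt_or_eq_of_le htIcc.1 with h | h
        · exact h
        · exfalso; rw [← h, Ifun_zero] at htval; linarith
      have ht1 : t < 1 := by
        rcases lt_or_eq_of_le htIcc.2 with h | h
        · exact h
        · exfalso; rw [h] at htval; linarith
      refine ⟨(t * ‖y‖⁻¹) • y, ?_, ?_⟩
      · rw [hmem]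
        have hxnorm : ‖(t * ‖y‖⁻¹) • y‖ = t := by
          rw [norm_smul, Real.norm_eq_abs, abs_of_pos (by positivity), mul_assoc,
            inv_mul_cancel₀ hy0.ne', mul_one]
        constructor
        · rw [hxnorm]; exact ht1
        · intro h; rw [h, norm_zero] at hxnorm; linarith
      · have hxnorm : ‖(t * ‖y‖⁻¹) • y‖ = t := by
          rw [norm_smul, Real.norm_eq_abs, abs_of_pos (by positivity), mul_assoc,
            inv_mul_cancel₀ hy0.ne', mul_one]
        rw [radMap, hxnorm, htval, Real.exp_log hy0, smul_smul]
        have : ‖y‖ * t⁻¹ * (t * ‖y‖⁻¹) = 1 := by field_simp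
        rw [this, one_smul]
  refine ⟨hinj, himage, ?_, ?_, ?_⟩
  · exact fun x hx => (hCD x hx).contDiffWithinAt
  · rw [← himage]
    refine continuousOn_invFunOn hinj hsopen ?_
    intro x hx
    obtain ⟨hx1, hx0⟩ := (hmem x).1 hx
    obtain ⟨hb, hba⟩ := habs x hx
    have hstrict : HasStrictFDerivAt (radMap n K) (fderiv ℝ (radMap n K) x) x :=
      (hCD x hx).hasStrictFDerivAt one_ne_zero
    rw [(hD x hx).fderiv] at hstrict
    have hinjD := Dmap_injective _ _ hb hba hx0
    let eL := LinearEquiv.ofInjectiveEndo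
      ((Dmap (Real.exp (Ifun K ‖x‖) * ‖x‖⁻¹)
        (Real.exp (Ifun K ‖x‖) / (‖x‖ * K ‖x‖)) x : EuclideanSpace ℝ (Fin n) →ₗ[ℝ]
        EuclideanSpace ℝ (Fin n))) hinjD
    let eC := eL.toContinuousLinearEquiv
    have hcoe : (eC : EuclideanSpace ℝ (Fin n) →L[ℝ] EuclideanSpace ℝ (Fin n))
        = Dmap (Real.exp (Ifun K ‖x‖) * ‖x‖⁻¹)
          (Real.exp (Ifun K ‖x‖) / (‖x‖ * K ‖x‖)) x := by
      ext h; rfl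
    rw [← hcoe] at hstrict
    exact hstrict.map_nhds_eq_of_equiv
  · intro x hx
    obtain ⟨hx1, hx0⟩ := (hmem x).1 hx
    have hr : (0:ℝ) < ‖x‖ := norm_pos_iff.2 hx0
    have hK1 : (1:ℝ) ≤ K ‖x‖ := hKge _ ⟨hr, hx1.le⟩
    have hKpos : (0:ℝ) < K ‖x‖ := lt_of_lt_of_le one_pos hK1
    have he : (0:ℝ) < Real.exp (Ifun K ‖x‖) := Real.exp_pos _
    obtain ⟨hb, hba⟩ := habs x hx
    have ha : (0:ℝ) < Real.exp (Ifun K ‖x‖) * ‖x‖⁻¹ := by positivity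
    have hfd := (hD x hx).fderiv
    refine ⟨(hD x hx).differentiableAt, ?_, ?_⟩
    · rw [hfd, Dmap_det _ _ hrank hx0]
      positivity
    · rw [hfd, Dmap_det _ _ hrank hx0,
        Dmap_opNorm _ _ hb.le hba hrank hn hx0,
        abs_of_pos (by positivity)]
      have hn1 : n - 1 + 1 = n := by omega
      have hpow : (Real.exp (Ifun K ‖x‖) * ‖x‖⁻¹) ^ n
          = (Real.exp (Ifun K ‖x‖) * ‖x‖⁻¹) ^ (n - 1) * (Real.exp (Ifun K ‖x‖) * ‖x‖⁻¹) := by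
        rw [← pow_succ, hn1]
      rw [hpow, mul_comm (Real.exp (Ifun K ‖x‖) / (‖x‖ * K ‖x‖)),
        mul_div_mul_left _ _ (pow_ne_zero _ ha.ne')]
      rw [div_eq_iff hb.ne']
      field_simp
end
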